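/- arXiv:2010.01936 — 10 statements merged into one kernel-verified Lean document; each statement's English description precedes it below -/
import Mathlib

section
/- A linear relation M on K^n is symmetric (i.e., M ⊆ M*) if and only if M equals the range of the block column matrix [F; G] for some matrices F, G ∈ K^{n×l} satisfying G*F = F*G. -/
open Matrix
open scoped ComplexOrder

namespace PHDAE
noncomputable section

/-- A linear relation on `ℂ^n`: a subspace of `ℂ^n × ℂ^n`. -/
abbrev Rel (n : ℕ) := Submodule ℂ ((Fin n → ℂ) × (Fin n → ℂ))

/-- The standard inner product `⟨x,y⟩ = ∑ conj (x i) * y i` on `ℂ^n`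
(conjugate-linear in the first argument). -/
noncomputable def ip {n : ℕ} (x y : Fin n → ℂ) : ℂ := star x ⬝ᵥ y

/-- The adjoint relation `M* = {(x,y) | ⟪x,w⟫ = ⟪y,v⟫ for all (v,w) ∈ M}`. -/
noncomputable def adj {n : ℕ} (M : Rel n) : Rel n where
  carrier := {p | ∀ q ∈ M, ip p.1 q.2 = ip p.2 q.1}
  add_mem' := by
    intro a b ha hb q hq
    simp only [Set.mem_setOf_eq, ip, Prod.fst_add, Prod.snd_add, star_add,
      add_dotProduct] at *
    rw [ha q hq, hb q hq]
  zero_mem' := by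
    intro q hq; simp [ip]
  smul_mem' := by
    intro c a ha q hq
    simp only [Set.mem_setOf_eq, ip, Prod.smul_fst, Prod.smul_snd, star_smul,
      smul_dotProduct] at *
    rw [ha q hq]

/-- `−M = {(x, −y) | (x,y) ∈ M}`. -/
def negRel {n : ℕ} (M : Rel n) : Rel n :=
  M.map (LinearMap.prodMap LinearMap.id (-LinearMap.id))

/-- The inverse relation `M⁻¹ = {(y,x) | (x,y) ∈ M}`. -/
def invRel {n : ℕ} (M : Rel n) : Rel n :=
  M.map (LinearEquiv.prodComm ℂ (Fin n → ℂ) (Fin n → ℂ)).toLinearMap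

/-- The product (composition) `D ∘ L = {(x,z) | ∃ y, (x,y) ∈ L ∧ (y,z) ∈ D}`. -/
def comp {n : ℕ} (D L : Rel n) : Rel n where
  carrier := {p | ∃ y, (p.1, y) ∈ L ∧ (y, p.2) ∈ D}
  add_mem' := by
    rintro a b ⟨y, hy1, hy2⟩ ⟨z, hz1, hz2⟩
    exact ⟨y + z, by simpa using L.add_mem hy1 hz1, by simpa using D.add_mem hy2 hz2⟩
  zero_mem' := ⟨0, L.zero_mem, D.zero_mem⟩
  smul_mem' := by
    rintro c a ⟨y, hy1, hy2⟩
    exact ⟨c • y, by simpa using L.smul_mem c hy1, by simpa using D.smul_mem c hy2⟩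

/-- The range representation `ran [F; G] = {(Fz, Gz) | z ∈ ℂ^l}`. -/
def ranRel {n l : ℕ} (F G : Matrix (Fin n) (Fin l) ℂ) : Rel n :=
  LinearMap.range ((Matrix.mulVecLin F).prod (Matrix.mulVecLin G))

/-- The kernel representation `ker [K, L] = {(x,y) | Kx + Ly = 0}`. -/
def kerRel {n : ℕ} (K L : Matrix (Fin n) (Fin n) ℂ) : Rel n :=
  LinearMap.ker ((Matrix.mulVecLin K).coprod (Matrix.mulVecLin L))

/-- The graph `{(x, Ax) | x ∈ ℂ^n}` of a matrix. -/
def graphRel {n : ℕ} (A : Matrix (Fin n) (Fin n) ℂ) : Rel n :=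
  ranRel 1 A

def domRel {n : ℕ} (M : Rel n) : Submodule ℂ (Fin n → ℂ) :=
  M.map (LinearMap.fst ℂ _ _)

def ranSRel {n : ℕ} (M : Rel n) : Submodule ℂ (Fin n → ℂ) :=
  M.map (LinearMap.snd ℂ _ _)

def kerSRel {n : ℕ} (M : Rel n) : Submodule ℂ (Fin n → ℂ) :=
  M.comap (LinearMap.inl ℂ _ _)

def mulRel {n : ℕ} (M : Rel n) : Submodule ℂ (Fin n → ℂ) :=
  M.comap (LinearMap.inr ℂ _ _)

/-- Orthogonal complement in `ℂ^n` with respect to the standard inner product. -/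
noncomputable def orth {n : ℕ} (S : Submodule ℂ (Fin n → ℂ)) : Submodule ℂ (Fin n → ℂ) where
  carrier := {y | ∀ x ∈ S, ip x y = 0}
  add_mem' := by
    intro a b ha hb x hx
    simp only [Set.mem_setOf_eq, ip, dotProduct_add] at *
    rw [ha x hx, hb x hx, add_zero]
  zero_mem' := by intro x hx; simp [ip]
  smul_mem' := by
    intro c a ha x hx
    simp only [Set.mem_setOf_eq, ip, dotProduct_smul] at *
    rw [ha x hx, smul_zero]

def IsSymmetricRel {n : ℕ} (M : Rel n) : Prop := M ≤ adj M
def IsSelfAdjointRel {n : ℕ} (M : Rel n) : Prop := M = adj M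
def IsSkewSymmetricRel {n : ℕ} (M : Rel n) : Prop := M ≤ negRel (adj M)
def IsSkewAdjointRel {n : ℕ} (M : Rel n) : Prop := M = negRel (adj M)

def IsDissipativeRel {n : ℕ} (M : Rel n) : Prop := ∀ p ∈ M, (ip p.1 p.2).re ≤ 0
def IsNonnegRel {n : ℕ} (M : Rel n) : Prop :=
  IsSymmetricRel M ∧ ∀ p ∈ M, 0 ≤ ip p.1 p.2
def IsMaxDissipativeRel {n : ℕ} (M : Rel n) : Prop :=
  IsDissipativeRel M ∧ ∀ M' : Rel n, IsDissipativeRel M' → M ≤ M' → M = M'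
def IsMaxNonnegRel {n : ℕ} (M : Rel n) : Prop :=
  IsNonnegRel M ∧ ∀ M' : Rel n, IsNonnegRel M' → M ≤ M' → M = M'

/-- `det (s E − A)` as a polynomial in `s`. -/
noncomputable def pencilDet {n : ℕ} (E A : Matrix (Fin n) (Fin n) ℂ) : Polynomial ℂ :=
  ((Polynomial.X : Polynomial ℂ) • E.map Polynomial.C - A.map Polynomial.C).det

/-- A square pencil is regular if `det (sE − A)` is not the zero polynomial. -/
def PencilRegular {n : ℕ} (E A : Matrix (Fin n) (Fin n) ℂ) : Prop :=
  pencilDet E A ≠ 0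

/-- The (generic) rank of the pencil `sE − A` over the field of rational functions. -/
noncomputable def pencilRank {n : ℕ} (E A : Matrix (Fin n) (Fin n) ℂ) : ℕ :=
  (((Polynomial.X : Polynomial ℂ) • E.map Polynomial.C - A.map Polynomial.C).map
    (algebraMap (Polynomial ℂ) (RatFunc ℂ))).rank

/-- `μ` is an eigenvalue of `sE − A` if the rank of `μE − A` drops below the generic rank. -/
noncomputable def IsPencilEigenvalue {n : ℕ} (E A : Matrix (Fin n) (Fin n) ℂ) (μ : ℂ) : Prop :=
  (μ • E - A).rank < pencilRank E A

/-- For a regular pencil, the eigenvalue `μ` is semi-simple iff there is no Jordan chain of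
length two, i.e. no `x ≠ 0` with `(μE − A)x = 0` and `Ex ∈ ran (μE − A)`. -/
def SemiSimpleEig {n : ℕ} (E A : Matrix (Fin n) (Fin n) ℂ) (μ : ℂ) : Prop :=
  ¬ ∃ x y : Fin n → ℂ, x ≠ 0 ∧ (μ • E - A).mulVec x = 0 ∧ (μ • E - A).mulVec y = E.mulVec x

/-- For a regular pencil, all Jordan blocks at the eigenvalue `μ` have size at most two iff
there is no Jordan chain of length three. -/
def JordanBlocksAtMostTwo {n : ℕ} (E A : Matrix (Fin n) (Fin n) ℂ) (μ : ℂ) : Prop :=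
  ¬ ∃ x y z : Fin n → ℂ, x ≠ 0 ∧ (μ • E - A).mulVec x = 0 ∧
    (μ • E - A).mulVec y = E.mulVec x ∧ (μ • E - A).mulVec z = E.mulVec y

/-- A fixed matrix norm (Frobenius norm); the resolvent-growth characterizations are
independent of the choice of matrix norm. -/
noncomputable def mnorm {n : ℕ} (M : Matrix (Fin n) (Fin n) ℂ) : ℝ :=
  Real.sqrt (∑ i, ∑ j, ‖M i j‖ ^ 2)

end
end PHDAE

open PHDAE Matrix in
/-- `M` is symmetric iff `M = ran [F; G]` for some `F, G` with `G*F = F*G`. -/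
theorem stmt_1 {n : ℕ} (M : Rel n) :
    IsSymmetricRel M ↔ ∃ (l : ℕ) (F G : Matrix (Fin n) (Fin l) ℂ),
      M = ranRel F G ∧ Gᴴ * F = Fᴴ * G := by
  constructor
  · intro hM
    classical
    set l := Module.finrank ℂ M with hl
    let b : Module.Basis (Fin l) ℂ M := Module.finBasis ℂ M
    set F : Matrix (Fin n) (Fin l) ℂ := fun i j => ((b j : (Fin n → ℂ) × (Fin n → ℂ)).1 i)
    set G : Matrix (Fin n) (Fin l) ℂ := fun i j => ((b j : (Fin n → ℂ) × (Fin n → ℂ)).2 i)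
    have key : ∀ z : Fin l → ℂ,
        (F.mulVec z, G.mulVec z) = ((∑ j, z j • b j : M) : (Fin n → ℂ) × (Fin n → ℂ)) := by
      intro z
      have hc : ((∑ j, z j • b j : M) : (Fin n → ℂ) × (Fin n → ℂ))
          = ∑ j, z j • (b j : (Fin n → ℂ) × (Fin n → ℂ)) := by
        push_cast [Submodule.coe_sum]
        rfl
      rw [hc]
      ext i <;> simp [Matrix.mulVec, dotProduct, F, G, Finset.sum_apply,
        Prod.fst_sum, Prod.snd_sum, mul_comm]
    refine ⟨l, F, G, ?_, ?_⟩
    · ext p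
      constructor
      · intro hp
        refine ⟨b.equivFun ⟨p, hp⟩, ?_⟩
        have := key (b.equivFun ⟨p, hp⟩)
        rw [b.sum_equivFun] at this
        simpa using this
      · rintro ⟨z, rfl⟩
        have := key z
        simp only [LinearMap.prod_apply, Function.prod, Matrix.mulVecLin_apply]
        rw [show (F.mulVec z, G.mulVec z)
            = ((∑ j, z j • b j : M) : (Fin n → ℂ) × (Fin n → ℂ)) from this]
        exact ((∑ j, z j • b j : M)).2
    · ext i j
      have h1 := hM (b i).2 (b j) (b j).2
      simp only [ip, dotProduct] at h1
      simp only [Matrix.mul_apply, Matrix.conjTranspose_apply, F, G]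
      calc ∑ k, star (((b i : (Fin n → ℂ) × (Fin n → ℂ)).2) k) * ((b j : (Fin n → ℂ) × (Fin n → ℂ)).1) k
          = ∑ k, star (((b i : (Fin n → ℂ) × (Fin n → ℂ)).1) k) * ((b j : (Fin n → ℂ) × (Fin n → ℂ)).2) k := ?_
        _ = _ := rfl
      · have h2 := hM (b j).2 (b i) (b i).2
        -- h1 : ip (b i).1 (b j).2 = ip (b i).2 (b j).1
        exact h1.symm
  · rintro ⟨l, F, G, rfl, hFG⟩
    rintro ⟨x, y⟩ hp q hq
    obtain ⟨z, hz⟩ := hp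
    obtain ⟨w, hw⟩ := hq
    rw [Prod.mk.injEq] at hz
    simp only [LinearMap.prod_apply, Function.prod, Matrix.mulVecLin_apply] at hz hw
    obtain ⟨hz1, hz2⟩ := hz
    have hq1 : q.1 = F.mulVec w := by rw [← hw]
    have hq2 : q.2 = G.mulVec w := by rw [← hw]
    simp only [ip]
    rw [hq1, hq2, ← hz1, ← hz2]
    rw [Matrix.star_mulVec, Matrix.star_mulVec, Matrix.dotProduct_mulVec,
      Matrix.dotProduct_mulVec, Matrix.vecMul_vecMul, Matrix.vecMul_vecMul, hFG]
end

section
/- For a linear relation M on K^n, the following are equivalent: (a) M is self-adjoint (M = M*); (b) M is symmetric and dim M = n; (c) M = ker[K, L] for some K, L ∈ K^{n×n} with KL* = LK* and rank[K, L] = n. -/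
open Matrix
open scoped ComplexOrder

-- ===================== AUX =====================
namespace Stmt2Aux
open PHDAE Matrix Module

variable {n : ℕ}

noncomputable def iota (n : ℕ) : ((Fin n → ℂ) × (Fin n → ℂ)) ≃ₗ[ℂ]
    WithLp 2 (EuclideanSpace ℂ (Fin n) × EuclideanSpace ℂ (Fin n)) :=
  ((WithLp.linearEquiv 2 ℂ (Fin n → ℂ)).symm.prodCongr
    (WithLp.linearEquiv 2 ℂ (Fin n → ℂ)).symm).trans (WithLp.linearEquiv 2 ℂ _).symm

noncomputable def Jmap (n : ℕ) : ((Fin n → ℂ) × (Fin n → ℂ)) ≃ₗ[ℂ] ((Fin n → ℂ) × (Fin n → ℂ)) :=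
  (LinearEquiv.prodComm ℂ _ _).trans ((LinearEquiv.refl ℂ _).prodCongr (LinearEquiv.neg ℂ))

lemma conj_dot (a b : Fin n → ℂ) : (starRingEnd ℂ) (star a ⬝ᵥ b) = star b ⬝ᵥ a := by
  simp [dotProduct, map_sum, mul_comm, Pi.star_apply]

lemma inner_iota (p q : (Fin n → ℂ) × (Fin n → ℂ)) :
    (inner ℂ (iota n (Jmap n q)) (iota n p) : ℂ) = star q.2 ⬝ᵥ p.1 - star q.1 ⬝ᵥ p.2 := by
  simp only [iota, Jmap, WithLp.prod_inner_apply, PiLp.inner_apply, RCLike.inner_apply,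
    LinearEquiv.trans_apply, LinearEquiv.prodComm_apply, LinearEquiv.prodCongr_apply,
    LinearEquiv.neg_apply, LinearEquiv.refl_apply, Prod.swap, Prod.map]
  show (∑ x, p.1 x * (starRingEnd ℂ) (q.2 x)) + ∑ x, p.2 x * (starRingEnd ℂ) ((-q.1) x) = _
  simp [dotProduct, sub_eq_add_neg, Pi.star_apply, mul_comm]

lemma adj_eq_orth (M : Rel n) :
    adj M = Submodule.comap (iota n).toLinearMap
      ((Submodule.map ((iota n).toLinearMap ∘ₗ (Jmap n).toLinearMap) M)ᗮ) := by
  ext p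
  simp only [Submodule.mem_comap, Submodule.mem_orthogonal, Submodule.mem_map,
    LinearMap.coe_comp, Function.comp_apply, LinearEquiv.coe_coe,
    forall_exists_index, and_imp]
  constructor
  · rintro hp _ q hq rfl
    rw [inner_iota, sub_eq_zero]
    have h2 := congrArg (starRingEnd ℂ) (hp q hq)
    rwa [ip, ip, conj_dot, conj_dot] at h2
  · intro h q hq
    have h1 := h _ q hq rfl
    rw [inner_iota, sub_eq_zero] at h1
    have h2 := congrArg (starRingEnd ℂ) h1
    rwa [conj_dot, conj_dot, ← ip, ← ip] at h2

lemma finrank_adj (M : Rel n) : finrank ℂ (adj M) + finrank ℂ M = 2 * n := by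
  rw [adj_eq_orth, Submodule.comap_equiv_eq_map_symm, LinearEquiv.finrank_map_eq]
  have h1 : Submodule.map ((iota n).toLinearMap ∘ₗ (Jmap n).toLinearMap) M
      = Submodule.map ((Jmap n).trans (iota n)).toLinearMap M := rfl
  rw [h1]
  have h2 := Submodule.finrank_add_finrank_orthogonal
    (Submodule.map ((Jmap n).trans (iota n)).toLinearMap M)
  rw [LinearEquiv.finrank_map_eq] at h2
  have h3 : finrank ℂ (WithLp 2 (EuclideanSpace ℂ (Fin n) × EuclideanSpace ℂ (Fin n))) = 2 * n := by
    rw [← (iota n).finrank_eq]; simp [finrank_prod, finrank_fin_fun]; ring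
  omega

lemma kerRel_eq_map (K L : Matrix (Fin n) (Fin n) ℂ) :
    kerRel K L = Submodule.map
      (LinearEquiv.sumArrowLequivProdArrow (Fin n) (Fin n) ℂ ℂ).toLinearMap
      (LinearMap.ker (fromCols K L).mulVecLin) := by
  ext p
  simp only [kerRel, LinearMap.mem_ker, Submodule.mem_map, LinearMap.coprod_apply,
    mulVecLin_apply, LinearEquiv.coe_coe]
  constructor
  · intro h
    refine ⟨Sum.elim p.1 p.2, ?_, ?_⟩
    · rw [fromCols_mulVec_sumElim]; exact h
    · rfl
  · rintro ⟨f, hf, rfl⟩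
    show K *ᵥ (f ∘ Sum.inl) + L *ᵥ (f ∘ Sum.inr) = 0
    have hfe : f = Sum.elim (f ∘ Sum.inl) (f ∘ Sum.inr) := by funext i; cases i <;> rfl
    rw [← fromCols_mulVec_sumElim, ← hfe]; exact hf

lemma finrank_kerRel (K L : Matrix (Fin n) (Fin n) ℂ) :
    finrank ℂ (kerRel K L) + (fromCols K L).rank = 2 * n := by
  rw [kerRel_eq_map, LinearEquiv.finrank_map_eq]
  have h := LinearMap.finrank_range_add_finrank_ker (fromCols K L).mulVecLin
  have hd : finrank ℂ (Fin n ⊕ Fin n → ℂ) = 2 * n := by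
    rw [Module.finrank_fintype_fun_eq_card]; simp; ring
  have hr : (fromCols K L).rank = finrank ℂ (LinearMap.range (fromCols K L).mulVecLin) :=
    rfl
  omega

lemma two_to_one (M : Rel n) (hsym : IsSymmetricRel M) (hfin : finrank ℂ M = n) :
    IsSelfAdjointRel M := by
  have h := finrank_adj M
  exact Submodule.eq_of_le_of_finrank_le hsym (by omega)


lemma two_to_three (M : Rel n) (hsym : IsSymmetricRel M) (hfin : finrank ℂ M = n) :
    ∃ K L : Matrix (Fin n) (Fin n) ℂ, M = kerRel K L ∧ K * Lᴴ = L * Kᴴ ∧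
      (fromCols K L).rank = n := by
  have hself : M = adj M := two_to_one M hsym hfin
  let b : Basis (Fin n) ℂ M := Module.finBasisOfFinrankEq ℂ M hfin
  set vv : Fin n → (Fin n → ℂ) := fun i => (b i : (Fin n → ℂ) × (Fin n → ℂ)).1 with hvv
  set ww : Fin n → (Fin n → ℂ) := fun i => (b i : (Fin n → ℂ) × (Fin n → ℂ)).2 with hww
  set K : Matrix (Fin n) (Fin n) ℂ := Matrix.of fun i j => (starRingEnd ℂ) (ww i j) with hK
  set L : Matrix (Fin n) (Fin n) ℂ := Matrix.of fun i j => -(starRingEnd ℂ) (vv i j) with hL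
  have hmemi : ∀ i, ((b i : (Fin n → ℂ) × (Fin n → ℂ))) ∈ M := fun i => (b i).2
  have hKx : ∀ x i, (K *ᵥ x) i = star (ww i) ⬝ᵥ x := by
    intro x i; simp [hK, mulVec, dotProduct, Pi.star_apply]
  have hLy : ∀ y i, (L *ᵥ y) i = -(star (vv i) ⬝ᵥ y) := by
    intro y i
    simp [hL, mulVec, dotProduct, Pi.star_apply, Finset.sum_neg_distrib]
  have hM : Submodule.span ℂ (Set.range (⇑M.subtype ∘ ⇑b)) = M := by
    have := congrArg (Submodule.map M.subtype) b.span_eq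
    rwa [Submodule.map_span, Submodule.map_top, Submodule.range_subtype,
      ← Set.range_comp] at this
  have hadj_iff : ∀ p : (Fin n → ℂ) × (Fin n → ℂ),
      p ∈ adj M ↔ ∀ i, star (ww i) ⬝ᵥ p.1 = star (vv i) ⬝ᵥ p.2 := by
    intro p
    constructor
    · intro hp i
      have h2 := congrArg (starRingEnd ℂ) (hp _ (hmemi i))
      rwa [ip, ip, conj_dot, conj_dot] at h2
    · intro h q hq
      rw [← hM] at hq
      induction hq using Submodule.span_induction with
      | mem q hq =>
        obtain ⟨i, rfl⟩ := hq
        have h2 := congrArg (starRingEnd ℂ) (h i)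
        rw [conj_dot, conj_dot] at h2
        exact h2
      | zero => simp [ip]
      | add x y hx hy ihx ihy =>
        simp only [ip, Prod.fst_add, Prod.snd_add, dotProduct_add] at *
        rw [ihx, ihy]
      | smul c x hx ih =>
        simp only [ip, Prod.smul_fst, Prod.smul_snd, dotProduct_smul] at *
        rw [ih]
  have hkereq : kerRel K L = M := by
    rw [hself]
    ext p
    rw [hadj_iff]
    simp only [kerRel, LinearMap.mem_ker, LinearMap.coprod_apply, mulVecLin_apply]
    constructor
    · intro h i
      have h2 := congrFun h i
      simp only [Pi.add_apply, Pi.zero_apply, hKx, hLy] at h2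
      exact add_neg_eq_zero.mp h2
    · intro h
      funext i
      simp only [Pi.add_apply, Pi.zero_apply, hKx, hLy, h i, add_neg_cancel]
  have hsymij : ∀ i j, ip (vv i) (ww j) = ip (ww i) (vv j) :=
    fun i j => hsym (hmemi i) _ (hmemi j)
  refine ⟨K, L, hkereq.symm, ?_, ?_⟩
  · ext i j
    have e1 : (K * Lᴴ) i j = -(ip (ww i) (vv j)) := by
      simp [hK, hL, Matrix.mul_apply, conjTranspose_apply, ip, dotProduct,
        Finset.sum_neg_distrib, mul_comm, Pi.star_apply]
    have e2 : (L * Kᴴ) i j = -(ip (vv i) (ww j)) := by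
      simp [hK, hL, Matrix.mul_apply, conjTranspose_apply, ip, dotProduct,
        Finset.sum_neg_distrib, mul_comm, Pi.star_apply]
    rw [e1, e2, hsymij i j]
  · have h1 := finrank_kerRel K L
    rw [hkereq, hfin] at h1
    omega

lemma three_to_two (M : Rel n) (K L : Matrix (Fin n) (Fin n) ℂ)
    (hM : M = kerRel K L) (hC : K * Lᴴ = L * Kᴴ) (hr : (fromCols K L).rank = n) :
    IsSymmetricRel M ∧ finrank ℂ M = n := by
  have hfin : finrank ℂ M = n := by
    have := finrank_kerRel K L; rw [← hM] at this; omega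
  refine ⟨?_, hfin⟩
  have hsurj : LinearMap.range (fromCols K L).mulVecLin = ⊤ := by
    apply Submodule.eq_top_of_finrank_eq
    have h0 : finrank ℂ (LinearMap.range (fromCols K L).mulVecLin)
        = (fromCols K L).rank := rfl
    rw [h0, hr, finrank_fin_fun]
  set f := (Matrix.mulVecLin Lᴴ).prod (Matrix.mulVecLin (-Kᴴ)) with hfdef
  have hker0 : ∀ u : Fin n → ℂ, Lᴴ *ᵥ u = 0 → Kᴴ *ᵥ u = 0 → u = 0 := by
    intro u h1 h2
    have hx : ∃ g : Fin n ⊕ Fin n → ℂ, (fromCols K L).mulVecLin g = u := by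
      have : u ∈ LinearMap.range (fromCols K L).mulVecLin := by rw [hsurj]; trivial
      exact this
    obtain ⟨g, hg⟩ := hx
    have hge : g = Sum.elim (g ∘ Sum.inl) (g ∘ Sum.inr) := by funext i; cases i <;> rfl
    have hu : u = K *ᵥ (g ∘ Sum.inl) + L *ᵥ (g ∘ Sum.inr) := by
      rw [← hg, mulVecLin_apply]
      conv_lhs => rw [hge]
      rw [fromCols_mulVec_sumElim]
    have hz : star u ⬝ᵥ u = 0 := by
      nth_rewrite 2 [hu]
      rw [dotProduct_add, dotProduct_mulVec, dotProduct_mulVec]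
      have e1 : star u ᵥ* K = star (Kᴴ *ᵥ u) := by
        rw [star_mulVec, conjTranspose_conjTranspose]
      have e2 : star u ᵥ* L = star (Lᴴ *ᵥ u) := by
        rw [star_mulVec, conjTranspose_conjTranspose]
      rw [e1, e2, h1, h2]
      simp
    exact dotProduct_star_self_eq_zero.mp hz
  have hkerf : LinearMap.ker f = ⊥ := by
    rw [eq_bot_iff]
    intro u hu
    simp only [LinearMap.mem_ker, hfdef, LinearMap.prod_apply, Function.prod,
      mulVecLin_apply, Prod.mk_eq_zero] at hu
    obtain ⟨h1, h2⟩ := hu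
    rw [neg_mulVec, neg_eq_zero] at h2
    exact hker0 u h1 h2
  have hfr : finrank ℂ (LinearMap.range f) = n := by
    have h := LinearMap.finrank_range_add_finrank_ker f
    rw [hkerf, finrank_bot, finrank_fin_fun] at h
    omega
  have hle : ranRel Lᴴ (-Kᴴ) ≤ M := by
    rw [hM]
    rintro p ⟨u, rfl⟩
    show K *ᵥ (Lᴴ *ᵥ u) + L *ᵥ ((-Kᴴ) *ᵥ u) = 0
    rw [neg_mulVec, Matrix.mulVec_neg, mulVec_mulVec, mulVec_mulVec, hC, add_neg_cancel]
  have hEq : ranRel Lᴴ (-Kᴴ) = M := by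
    apply Submodule.eq_of_le_of_finrank_le hle
    rw [hfin]
    have : ranRel Lᴴ (-Kᴴ) = LinearMap.range f := rfl
    rw [this, hfr]
  rw [← hEq]
  rintro p ⟨u, rfl⟩ q ⟨v, rfl⟩
  show ip (Lᴴ *ᵥ u) ((-Kᴴ) *ᵥ v) = ip ((-Kᴴ) *ᵥ u) (Lᴴ *ᵥ v)
  rw [ip, ip, neg_mulVec, neg_mulVec, dotProduct_neg, star_neg, neg_dotProduct, neg_inj,
    star_mulVec, star_mulVec, conjTranspose_conjTranspose, conjTranspose_conjTranspose,
    ← dotProduct_mulVec, ← dotProduct_mulVec, mulVec_mulVec, mulVec_mulVec, hC]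

end Stmt2Aux

open PHDAE Matrix in
/-- `M` is self-adjoint ⟺ symmetric with `dim M = n`
⟺ `M = ker [K, L]` with `KL* = LK*` and `rank [K, L] = n`. -/
theorem stmt_2 {n : ℕ} (M : Rel n) :
    List.TFAE [IsSelfAdjointRel M,
      IsSymmetricRel M ∧ Module.finrank ℂ M = n,
      ∃ K L : Matrix (Fin n) (Fin n) ℂ, M = kerRel K L ∧ K * Lᴴ = L * Kᴴ ∧
        (Matrix.fromCols K L).rank = n] := by
  tfae_have 1 → 2 := by
    intro h
    refine ⟨h.le, ?_⟩
    have := Stmt2Aux.finrank_adj M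
    rw [← h] at this
    omega
  tfae_have 2 → 1 := fun ⟨hs, hf⟩ => Stmt2Aux.two_to_one M hs hf
  tfae_have 2 → 3 := fun ⟨hs, hf⟩ => Stmt2Aux.two_to_three M hs hf
  tfae_have 3 → 2 := fun ⟨K, L, hM, hC, hr⟩ => Stmt2Aux.three_to_two M K L hM hC hr
  tfae_finish
end

section
/- For a linear relation M on K^n, the following are equivalent: (a) M is skew-adjoint (M = −M*); (b) M is skew-symmetric (M ⊆ −M*) and dim M = n; (c) M = ker[K, L] for some K, L ∈ K^{n×n} with KL* = −LK* and rank[K, L] = n. -/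
open Matrix
open scoped ComplexOrder

namespace Stmt3Aux
open PHDAE Matrix Module LinearMap

variable {n : ℕ}

lemma mem_negAdj (M : Rel n) (p : (Fin n → ℂ) × (Fin n → ℂ)) :
    p ∈ negRel (adj M) ↔ ∀ q ∈ M, ip p.1 q.2 + ip p.2 q.1 = 0 := by
  constructor
  · rintro ⟨⟨a, b⟩, hab, rfl⟩ q hq
    have := hab q hq
    simp only [LinearMap.prodMap_apply, LinearMap.id_apply, LinearMap.neg_apply]
    simp only [ip, star_neg, neg_dotProduct] at this ⊢
    rw [this, add_neg_cancel]
  · intro h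
    refine ⟨(p.1, -p.2), ?_, ?_⟩
    · intro q hq
      have := h q hq
      simp only [ip] at this
      simp only [ip, star_neg, neg_dotProduct]
      linear_combination this
    · simp

lemma conj_dot (a b : Fin n → ℂ) : (starRingEnd ℂ) (star a ⬝ᵥ b) = star b ⬝ᵥ a := by
  simp only [dotProduct, map_sum, Pi.star_apply, _root_.map_mul, Complex.star_def,
    Complex.conj_conj]
  exact Finset.sum_congr rfl fun i _ => mul_comm _ _

noncomputable def psi (n : ℕ) :
    ((Fin n → ℂ) × (Fin n → ℂ)) ≃ₗ[ℂ] EuclideanSpace ℂ (Fin n ⊕ Fin n) :=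
  ((LinearEquiv.sumArrowLequivProdArrow (Fin n) (Fin n) ℂ ℂ).symm).trans
    (WithLp.linearEquiv 2 ℂ ((Fin n ⊕ Fin n) → ℂ)).symm

lemma psi_apply (p : (Fin n → ℂ) × (Fin n → ℂ)) (i : Fin n ⊕ Fin n) :
    psi n p i = Sum.elim p.1 p.2 i := by
  cases i <;> rfl

lemma inner_psi (p q : (Fin n → ℂ) × (Fin n → ℂ)) :
    (inner ℂ (psi n p) (psi n q) : ℂ) = star p.1 ⬝ᵥ q.1 + star p.2 ⬝ᵥ q.2 := by
  simp only [PiLp.inner_apply, RCLike.inner_apply, Fintype.sum_sum_type,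
    psi_apply, dotProduct, Pi.star_apply, Sum.elim_inl, Sum.elim_inr]
  simp only [mul_comm, Complex.star_def]

noncomputable def phi (n : ℕ) :
    ((Fin n → ℂ) × (Fin n → ℂ)) ≃ₗ[ℂ] EuclideanSpace ℂ (Fin n ⊕ Fin n) :=
  (LinearEquiv.prodComm ℂ _ _).trans (psi n)

lemma map_negAdj (M : Rel n) :
    (negRel (adj M)).map (psi n).toLinearMap = (M.map (phi n).toLinearMap)ᗮ := by
  ext v
  rw [Submodule.mem_map_equiv, mem_negAdj, Submodule.mem_orthogonal]
  have hv : v = psi n ((psi n).symm v) := ((psi n).apply_symm_apply v).symm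
  set p := (psi n).symm v with hp
  constructor
  · rintro h u ⟨q, hq, rfl⟩
    have h1 := h q hq
    show (inner ℂ (psi n (q.2, q.1)) v : ℂ) = 0
    rw [hv, inner_psi]
    have h2 := congrArg (starRingEnd ℂ) h1
    simp only [ip, map_add, conj_dot, map_zero] at h2
    simpa using h2
  · intro h q hq
    have h1 := h ((phi n).toLinearMap q) ⟨q, hq, rfl⟩
    rw [show ((phi n).toLinearMap q : EuclideanSpace ℂ (Fin n ⊕ Fin n)) = psi n (q.2, q.1) from rfl,
      hv, inner_psi] at h1
    have h2 := congrArg (starRingEnd ℂ) h1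
    simp only [map_add, conj_dot, map_zero] at h2
    simpa [ip] using h2

lemma finrank_negAdj (M : Rel n) :
    finrank ℂ (negRel (adj M)) + finrank ℂ M = 2 * n := by
  have h1 : finrank ℂ ((negRel (adj M)).map (psi n).toLinearMap) = finrank ℂ (negRel (adj M)) :=
    LinearEquiv.finrank_map_eq _ _
  have h2 : finrank ℂ (M.map (phi n).toLinearMap) = finrank ℂ M :=
    LinearEquiv.finrank_map_eq _ _
  have h3 := Submodule.finrank_add_finrank_orthogonal (K := M.map (phi n).toLinearMap)
  rw [map_negAdj M] at h1
  have h4 : finrank ℂ (EuclideanSpace ℂ (Fin n ⊕ Fin n)) = 2 * n := by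
    simp [finrank_euclideanSpace]; ring
  omega

lemma rank_fromColumns_eq (K L : Matrix (Fin n) (Fin n) ℂ) :
    (fromCols K L).rank =
      finrank ℂ (LinearMap.range ((mulVecLin K).coprod (mulVecLin L))) := by
  have h : (fromCols K L).mulVecLin = ((mulVecLin K).coprod (mulVecLin L)).comp
      (LinearEquiv.sumArrowLequivProdArrow (Fin n) (Fin n) ℂ ℂ).toLinearMap := by
    apply LinearMap.ext; intro u
    show fromCols K L *ᵥ u = K *ᵥ (u ∘ Sum.inl) + L *ᵥ (u ∘ Sum.inr)
    have hu : u = Sum.elim (u ∘ Sum.inl) (u ∘ Sum.inr) := by funext i; cases i <;> rfl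
    conv_lhs => rw [hu]
    rw [fromCols_mulVec_sumElim]
  rw [Matrix.rank, h, LinearMap.range_comp, LinearEquiv.range, Submodule.map_top]

lemma finrank_ranRel_eq (F G : Matrix (Fin n) (Fin n) ℂ) :
    finrank ℂ (ranRel F G) = (fromRows F G).rank := by
  have h : (fromRows F G).mulVecLin =
      ((LinearEquiv.sumArrowLequivProdArrow (Fin n) (Fin n) ℂ ℂ).symm).toLinearMap.comp
        ((mulVecLin F).prod (mulVecLin G)) := by
    apply LinearMap.ext; intro u
    show fromRows F G *ᵥ u =
      (LinearEquiv.sumArrowLequivProdArrow (Fin n) (Fin n) ℂ ℂ).symm (F *ᵥ u, G *ᵥ u)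
    rw [fromRows_mulVec]
    ext (i | i) <;> rfl
  rw [Matrix.rank, h, LinearMap.range_comp]
  exact (LinearEquiv.finrank_map_eq _ _).symm

lemma ip_mulVec (A : Matrix (Fin n) (Fin n) ℂ) (x z : Fin n → ℂ) :
    ip x (A *ᵥ z) = star (Aᴴ *ᵥ x) ⬝ᵥ z := by
  rw [ip, dotProduct_mulVec, star_mulVec, conjTranspose_conjTranspose]

lemma mem_kerRel (K L : Matrix (Fin n) (Fin n) ℂ) (p : (Fin n → ℂ) × (Fin n → ℂ)) :
    p ∈ kerRel K L ↔ K *ᵥ p.1 + L *ᵥ p.2 = 0 := by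
  simp [kerRel, LinearMap.mem_ker]

lemma mem_ranRel (F G : Matrix (Fin n) (Fin n) ℂ) (p : (Fin n → ℂ) × (Fin n → ℂ)) :
    p ∈ ranRel F G ↔ ∃ z, (F *ᵥ z, G *ᵥ z) = p := by
  simp [ranRel, LinearMap.mem_range, LinearMap.prod_apply, Pi.prod, Prod.ext_iff,
    Matrix.mulVecLin_apply]

lemma negAdj_ranRel (F G : Matrix (Fin n) (Fin n) ℂ) :
    negRel (adj (ranRel F G)) = kerRel Gᴴ Fᴴ := by
  ext p
  rw [mem_negAdj, mem_kerRel]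
  constructor
  · intro h
    have key : ∀ z, star (Gᴴ *ᵥ p.1 + Fᴴ *ᵥ p.2) ⬝ᵥ z = 0 := by
      intro z
      have h1 := h (F *ᵥ z, G *ᵥ z) ((mem_ranRel F G _).mpr ⟨z, rfl⟩)
      rwa [ip_mulVec, ip_mulVec, ← add_dotProduct, ← star_add] at h1
    exact dotProduct_star_self_eq_zero.mp (key (Gᴴ *ᵥ p.1 + Fᴴ *ᵥ p.2))
  · intro h0 q hq
    obtain ⟨z, rfl⟩ := (mem_ranRel F G q).mp hq
    rw [ip_mulVec, ip_mulVec, ← add_dotProduct, ← star_add, h0, star_zero, zero_dotProduct]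

lemma finrank_prod_vec : finrank ℂ ((Fin n → ℂ) × (Fin n → ℂ)) = 2 * n := by
  simp [Module.finrank_prod]; ring

end Stmt3Aux

open PHDAE Matrix Module Stmt3Aux in
/-- `M` is skew-adjoint ⟺ skew-symmetric with `dim M = n`
⟺ `M = ker [K, L]` with `KL* = −LK*` and `rank [K, L] = n`. -/
theorem stmt_3 {n : ℕ} (M : Rel n) :
    List.TFAE [IsSkewAdjointRel M,
      IsSkewSymmetricRel M ∧ Module.finrank ℂ M = n,
      ∃ K L : Matrix (Fin n) (Fin n) ℂ, M = kerRel K L ∧ K * Lᴴ = -(L * Kᴴ) ∧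
        (Matrix.fromCols K L).rank = n] := by
  have h12 : IsSkewAdjointRel M → IsSkewSymmetricRel M ∧ finrank ℂ M = n := by
    intro h
    refine ⟨le_of_eq h, ?_⟩
    have h1 := finrank_negAdj M
    rw [← h] at h1
    omega
  have h21 : IsSkewSymmetricRel M ∧ finrank ℂ M = n → IsSkewAdjointRel M := by
    rintro ⟨hle, hr⟩
    have h1 := finrank_negAdj M
    exact Submodule.eq_of_le_of_finrank_eq hle (by omega)
  have h23 : IsSkewSymmetricRel M ∧ finrank ℂ M = n →
      ∃ K L : Matrix (Fin n) (Fin n) ℂ, M = kerRel K L ∧ K * Lᴴ = -(L * Kᴴ) ∧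
        (Matrix.fromCols K L).rank = n := by
    rintro ⟨hskew, hrank⟩
    have hM : M = negRel (adj M) := h21 ⟨hskew, hrank⟩
    let b : Basis (Fin n) ℂ M := (Module.finBasis ℂ M).reindex (finCongr hrank)
    let f : (Fin n → ℂ) →ₗ[ℂ] ((Fin n → ℂ) × (Fin n → ℂ)) :=
      M.subtype ∘ₗ (b.equivFun.symm : (Fin n → ℂ) ≃ₗ[ℂ] M).toLinearMap
    have hrange : LinearMap.range f = M := by
      rw [LinearMap.range_comp, LinearEquiv.range, Submodule.map_top, Submodule.range_subtype]
    set F := LinearMap.toMatrix' ((LinearMap.fst ℂ _ _) ∘ₗ f) with hF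
    set G := LinearMap.toMatrix' ((LinearMap.snd ℂ _ _) ∘ₗ f) with hG
    have hmF : F.mulVecLin = (LinearMap.fst ℂ _ _) ∘ₗ f := by
      rw [hF, ← Matrix.toLin'_apply', Matrix.toLin'_toMatrix']
    have hmG : G.mulVecLin = (LinearMap.snd ℂ _ _) ∘ₗ f := by
      rw [hG, ← Matrix.toLin'_apply', Matrix.toLin'_toMatrix']
    have hf : (F.mulVecLin).prod (G.mulVecLin) = f := by
      rw [hmF, hmG]
      apply LinearMap.ext; intro z; rfl
    have hran : ranRel F G = M := by rw [ranRel, hf, hrange]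
    refine ⟨Gᴴ, Fᴴ, ?_, ?_, ?_⟩
    · rw [← negAdj_ranRel, hran]; exact hM
    · have key : ∀ u, (Fᴴ * G + Gᴴ * F) *ᵥ u = 0 := by
        intro u
        have keyz : ∀ z, star z ⬝ᵥ ((Fᴴ * G + Gᴴ * F) *ᵥ u) = 0 := by
          intro z
          have hz : (F *ᵥ z, G *ᵥ z) ∈ M := by
            rw [← hran]; exact (mem_ranRel F G _).mpr ⟨z, rfl⟩
          have hu : (F *ᵥ u, G *ᵥ u) ∈ M := by
            rw [← hran]; exact (mem_ranRel F G _).mpr ⟨u, rfl⟩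
          have h1 := (mem_negAdj M _).mp (hskew hz) _ hu
          calc star z ⬝ᵥ ((Fᴴ * G + Gᴴ * F) *ᵥ u)
              = ip (F *ᵥ z) (G *ᵥ u) + ip (G *ᵥ z) (F *ᵥ u) := by
                simp only [ip, star_mulVec, ← dotProduct_mulVec, mulVec_mulVec,
                  add_mulVec, dotProduct_add]
            _ = 0 := h1
        exact dotProduct_star_self_eq_zero.mp (keyz ((Fᴴ * G + Gᴴ * F) *ᵥ u))
      have hmat : Fᴴ * G + Gᴴ * F = 0 := by
        have hlin : Matrix.toLin' (Fᴴ * G + Gᴴ * F) = 0 := by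
          rw [Matrix.toLin'_apply']
          exact LinearMap.ext fun u => key u
        calc Fᴴ * G + Gᴴ * F
            = LinearMap.toMatrix' (Matrix.toLin' (Fᴴ * G + Gᴴ * F)) :=
              (LinearMap.toMatrix'_toLin' _).symm
          _ = LinearMap.toMatrix' 0 := by rw [hlin]
          _ = 0 := map_zero _
      simp only [conjTranspose_conjTranspose]
      exact eq_neg_of_add_eq_zero_right hmat
    · rw [rank_fromColumns_eq]
      have h5 := LinearMap.finrank_range_add_finrank_ker
        ((Matrix.mulVecLin Gᴴ).coprod (Matrix.mulVecLin Fᴴ))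
      have hker : LinearMap.ker ((Matrix.mulVecLin Gᴴ).coprod (Matrix.mulVecLin Fᴴ)) = M := by
        rw [show LinearMap.ker ((Matrix.mulVecLin Gᴴ).coprod (Matrix.mulVecLin Fᴴ)) =
          kerRel Gᴴ Fᴴ from rfl, ← negAdj_ranRel, hran, ← hM]
      rw [hker, finrank_prod_vec] at h5
      omega
  have h32 : (∃ K L : Matrix (Fin n) (Fin n) ℂ, M = kerRel K L ∧ K * Lᴴ = -(L * Kᴴ) ∧
        (Matrix.fromCols K L).rank = n) → IsSkewSymmetricRel M ∧ finrank ℂ M = n := by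
    rintro ⟨K, L, hM, hKL, hrank⟩
    have hKL0 : K * Lᴴ + L * Kᴴ = 0 := by rw [hKL, neg_add_cancel]
    have h5 := LinearMap.finrank_range_add_finrank_ker
      ((Matrix.mulVecLin K).coprod (Matrix.mulVecLin L))
    have hr : finrank ℂ (LinearMap.range ((Matrix.mulVecLin K).coprod (Matrix.mulVecLin L))) =
        n := by rw [← rank_fromColumns_eq, hrank]
    rw [hr, finrank_prod_vec] at h5
    have hfinM : finrank ℂ M = n := by
      rw [hM]
      show finrank ℂ (LinearMap.ker ((Matrix.mulVecLin K).coprod (Matrix.mulVecLin L))) = n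
      omega
    refine ⟨?_, hfinM⟩
    have hle : ranRel Lᴴ Kᴴ ≤ M := by
      rw [hM]
      intro p hp
      obtain ⟨u, rfl⟩ := (mem_ranRel Lᴴ Kᴴ p).mp hp
      rw [mem_kerRel]
      show K *ᵥ (Lᴴ *ᵥ u) + L *ᵥ (Kᴴ *ᵥ u) = 0
      rw [mulVec_mulVec, mulVec_mulVec, ← add_mulVec, hKL0, zero_mulVec]
    have hfr : finrank ℂ (ranRel Lᴴ Kᴴ) = n := by
      have hcc : (fromCols L K).rank = (fromCols K L).rank := by
        rw [rank_fromColumns_eq, rank_fromColumns_eq, LinearMap.range_coprod,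
          LinearMap.range_coprod, sup_comm]
      rw [finrank_ranRel_eq, ← conjTranspose_fromCols_eq_fromRows_conjTranspose,
        rank_conjTranspose, hcc, hrank]
    have heq : ranRel Lᴴ Kᴴ = M := Submodule.eq_of_le_of_finrank_eq hle (by rw [hfr, hfinM])
    intro p hp
    rw [mem_negAdj]
    intro q hq
    rw [← heq] at hp hq
    obtain ⟨u, rfl⟩ := (mem_ranRel Lᴴ Kᴴ p).mp hp
    obtain ⟨w, rfl⟩ := (mem_ranRel Lᴴ Kᴴ q).mp hq
    show ip (Lᴴ *ᵥ u) (Kᴴ *ᵥ w) + ip (Kᴴ *ᵥ u) (Lᴴ *ᵥ w) = 0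
    calc ip (Lᴴ *ᵥ u) (Kᴴ *ᵥ w) + ip (Kᴴ *ᵥ u) (Lᴴ *ᵥ w)
        = star u ⬝ᵥ ((L * Kᴴ + K * Lᴴ) *ᵥ w) := by
          simp only [ip, star_mulVec, conjTranspose_conjTranspose, ← dotProduct_mulVec,
            mulVec_mulVec, add_mulVec, dotProduct_add]
      _ = 0 := by rw [add_comm (L * Kᴴ), hKL0, zero_mulVec, dotProduct_zero]
  tfae_have 1 → 2 := h12
  tfae_have 2 → 1 := h21
  tfae_have 2 → 3 := h23
  tfae_have 3 → 2 := h32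
  tfae_finish
end

section
/- Let M = ran[F; G] for F, G ∈ K^{n×l}. Then M is nonnegative if and only if G*F = F*G ≥ 0 (positive semi-definite), and M is dissipative if and only if G*F + F*G ≤ 0 (negative semi-definite). -/
open Matrix
open scoped ComplexOrder

section Aux
open PHDAE Matrix
open scoped ComplexOrder

private lemma ip_mulVec {n l : ℕ} (F G : Matrix (Fin n) (Fin l) ℂ) (z w : Fin l → ℂ) :
    ip (F.mulVec z) (G.mulVec w) = star z ⬝ᵥ (Fᴴ * G).mulVec w := by
  simp [ip, star_mulVec, dotProduct_mulVec, vecMul_vecMul]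

private lemma mat_ext_of_quad {l : ℕ} {A B : Matrix (Fin l) (Fin l) ℂ}
    (h : ∀ z w, star z ⬝ᵥ A.mulVec w = star z ⬝ᵥ B.mulVec w) : A = B := by
  ext i j
  have := h (Pi.single i 1) (Pi.single j 1)
  simpa [mulVec_single, dotProduct, Pi.single_apply, apply_ite] using this

private lemma star_quad {l : ℕ} (A : Matrix (Fin l) (Fin l) ℂ) (z : Fin l → ℂ) :
    star (star z ⬝ᵥ A.mulVec z) = star z ⬝ᵥ Aᴴ.mulVec z := by
  rw [star_dotProduct, star_star, star_mulVec, dotProduct_mulVec]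

private lemma mem_ranRel {n l : ℕ} {F G : Matrix (Fin n) (Fin l) ℂ}
    {p : (Fin n → ℂ) × (Fin n → ℂ)} (hp : p ∈ ranRel F G) :
    ∃ z, p = (F.mulVec z, G.mulVec z) := by
  obtain ⟨z, hz⟩ := hp
  exact ⟨z, by simpa [Prod.ext_iff, eq_comm] using hz⟩

private lemma ranRel_mem {n l : ℕ} (F G : Matrix (Fin n) (Fin l) ℂ) (z : Fin l → ℂ) :
    (F.mulVec z, G.mulVec z) ∈ ranRel F G := ⟨z, rfl⟩

end Aux

open PHDAE Matrix in
/-- `ran [F; G]` is nonnegative iff `G*F = F*G ≥ 0`,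
and dissipative iff `G*F + F*G ≤ 0`. -/
theorem stmt_5 {n l : ℕ} (F G : Matrix (Fin n) (Fin l) ℂ) :
    (IsNonnegRel (ranRel F G) ↔ Gᴴ * F = Fᴴ * G ∧ (Gᴴ * F).PosSemidef) ∧
    (IsDissipativeRel (ranRel F G) ↔ (-(Gᴴ * F + Fᴴ * G)).PosSemidef) := by
  have key : ∀ z w : Fin l → ℂ, ip (F.mulVec z) (G.mulVec w) = star z ⬝ᵥ (Fᴴ * G).mulVec w :=
    ip_mulVec F G
  have key2 : ∀ z w : Fin l → ℂ, ip (G.mulVec z) (F.mulVec w) = star z ⬝ᵥ (Gᴴ * F).mulVec w :=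
    ip_mulVec G F
  have hstar : ∀ z : Fin l → ℂ,
      star z ⬝ᵥ (Gᴴ * F).mulVec z = star (star z ⬝ᵥ (Fᴴ * G).mulVec z) := by
    intro z
    rw [star_quad, conjTranspose_mul, conjTranspose_conjTranspose]
  constructor
  · constructor
    · rintro ⟨hsym, hnn⟩
      have heq : Fᴴ * G = Gᴴ * F := by
        apply mat_ext_of_quad
        intro z w
        have h1 := hsym (ranRel_mem F G z) _ (ranRel_mem F G w)
        simpa [key, key2] using h1
      refine ⟨heq.symm, PosSemidef.of_dotProduct_mulVec_nonneg ?_ ?_⟩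
      · show (Gᴴ * F)ᴴ = Gᴴ * F
        rw [conjTranspose_mul, conjTranspose_conjTranspose, heq]
      · intro z
        have := hnn _ (ranRel_mem F G z)
        rw [key, heq] at this
        exact this
    · rintro ⟨heq, hherm, hpos⟩
      constructor
      · intro p hp q hq
        obtain ⟨z, rfl⟩ := mem_ranRel hp
        obtain ⟨w, rfl⟩ := mem_ranRel hq
        simp only [key, key2, heq]
      · intro p hp
        obtain ⟨z, rfl⟩ := mem_ranRel hp
        rw [key, ← heq]
        exact (posSemidef_iff_dotProduct_mulVec.mp ⟨hherm, hpos⟩).2 z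
  · have quad_iff : ∀ z : Fin l → ℂ,
        (0 ≤ star z ⬝ᵥ (-(Gᴴ * F + Fᴴ * G)).mulVec z ↔ (star z ⬝ᵥ (Fᴴ * G).mulVec z).re ≤ 0) := by
      intro z
      set q := star z ⬝ᵥ (Fᴴ * G).mulVec z with hq
      have : star z ⬝ᵥ (-(Gᴴ * F + Fᴴ * G)).mulVec z = -(star q + q) := by
        rw [neg_mulVec, dotProduct_neg, add_mulVec, dotProduct_add, hstar z]
      rw [this, Complex.le_def]
      simp only [Complex.zero_re, Complex.zero_im, Complex.neg_re, Complex.neg_im,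
        Complex.add_re, Complex.add_im]
      constructor
      · rintro ⟨h1, -⟩
        simp only [RCLike.star_def, Complex.conj_re] at h1
        linarith
      · intro h1
        refine ⟨by simp only [RCLike.star_def, Complex.conj_re]; linarith, by simp⟩
    constructor
    · intro hdis
      refine PosSemidef.of_dotProduct_mulVec_nonneg ?_ ?_
      · show (-(Gᴴ * F + Fᴴ * G))ᴴ = -(Gᴴ * F + Fᴴ * G)
        simp only [conjTranspose_neg, conjTranspose_add, conjTranspose_mul,
          conjTranspose_conjTranspose]
        rw [add_comm]
      · intro z
        rw [quad_iff z, ← key z z]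
        exact hdis (F.mulVec z, G.mulVec z) (ranRel_mem F G z)
    · intro hpsd p hp
      obtain ⟨z, rfl⟩ := mem_ranRel hp
      rw [key]
      exact (quad_iff z).mp (hpsd.dotProduct_mulVec_nonneg z)
end

section
/- A dissipative linear relation M ⊆ K^n × K^n is maximally dissipative (not properly contained in any dissipative relation) if and only if dim M = n. -/
open Matrix
open scoped ComplexOrder

namespace Stmt6Aux
open PHDAE Matrix

lemma ip_self_eq {n : ℕ} (x : Fin n → ℂ) : ip x x = ((∑ i, Complex.normSq (x i) : ℝ) : ℂ) := by
  simp only [ip, dotProduct, Pi.star_apply, RCLike.star_def, Complex.ofReal_sum]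
  refine Finset.sum_congr rfl fun i _ => ?_
  rw [mul_comm, Complex.mul_conj]

lemma eq_zero_of_ip_self_re {n : ℕ} (x : Fin n → ℂ) (h : (ip x x).re ≤ 0) : x = 0 := by
  rw [ip_self_eq, Complex.ofReal_re] at h
  have hsum : ∑ i, Complex.normSq (x i) = 0 :=
    le_antisymm h (Finset.sum_nonneg fun i _ => Complex.normSq_nonneg _)
  have := (Finset.sum_eq_zero_iff_of_nonneg (fun i _ => Complex.normSq_nonneg (x i))).mp hsum
  funext i
  exact Complex.normSq_eq_zero.mp (this i (Finset.mem_univ i))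

lemma ip_conj {n : ℕ} (x y : Fin n → ℂ) : ip x y = starRingEnd ℂ (ip y x) := by
  simp only [ip, dotProduct, Pi.star_apply, RCLike.star_def, map_sum]
  refine Finset.sum_congr rfl fun i _ => ?_
  rw [RingHom.map_mul, Complex.conj_conj, mul_comm]

lemma exists_orth {n : ℕ} (S : Submodule ℂ (Fin n → ℂ)) (hS : S ≠ ⊤) :
    ∃ v : Fin n → ℂ, v ≠ 0 ∧ ∀ s ∈ S, ip s v = 0 := by
  set e := (WithLp.linearEquiv 2 ℂ (Fin n → ℂ)).symm
  set S' : Submodule ℂ (EuclideanSpace ℂ (Fin n)) := S.map (e : (Fin n → ℂ) →ₗ[ℂ] _)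
  have hS' : S' ≠ ⊤ := by
    intro h
    apply hS
    have h2 : Submodule.map (e : (Fin n → ℂ) →ₗ[ℂ] EuclideanSpace ℂ (Fin n)) S =
        Submodule.map (e : (Fin n → ℂ) →ₗ[ℂ] EuclideanSpace ℂ (Fin n)) ⊤ := by
      rw [Submodule.map_top, LinearEquiv.range]; exact h
    exact Submodule.map_injective_of_injective e.injective h2
  have hbot : S'ᗮ ≠ ⊥ := fun h => hS' (Submodule.orthogonal_eq_bot_iff.mp h)
  obtain ⟨v', hv'S, hv'⟩ := Submodule.exists_mem_ne_zero_of_ne_bot hbot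
  refine ⟨(WithLp.linearEquiv 2 ℂ (Fin n → ℂ)) v', ?_, ?_⟩
  · simpa using hv'
  · intro s hs
    have := (Submodule.mem_orthogonal S' v').mp hv'S (e s) (Submodule.mem_map_of_mem hs)
    simpa [ip, dotProduct, PiLp.inner_apply, RCLike.inner_apply, e, WithLp.linearEquiv,
      WithLp.equiv, mul_comm] using this

/-- The map (x,y) ↦ x − y. -/
noncomputable def pi' (n : ℕ) : ((Fin n → ℂ) × (Fin n → ℂ)) →ₗ[ℂ] (Fin n → ℂ) :=
  LinearMap.fst ℂ _ _ - LinearMap.snd ℂ _ _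

lemma inj_on_dissipative {n : ℕ} {M : Rel n} (hM : IsDissipativeRel M) :
    Function.Injective ((pi' n).comp M.subtype) := by
  rw [← LinearMap.ker_eq_bot, LinearMap.ker_eq_bot']
  rintro ⟨p, hp⟩ h0
  have h1 : p.1 - p.2 = 0 := h0
  have h2 : p.1 = p.2 := sub_eq_zero.mp h1
  have h3 := hM p hp
  rw [← h2] at h3
  have h4 : p.1 = 0 := eq_zero_of_ip_self_re _ h3
  have h5 : p.2 = 0 := h2 ▸ h4
  exact Subtype.ext (Prod.ext h4 h5)

lemma finrank_eq_map {n : ℕ} {M : Rel n} (hM : IsDissipativeRel M) :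
    Module.finrank ℂ M = Module.finrank ℂ (M.map (pi' n)) := by
  have h := LinearMap.finrank_range_of_inj (inj_on_dissipative hM)
  rw [LinearMap.range_comp, Submodule.range_subtype] at h
  exact h.symm

lemma finrank_le_n {n : ℕ} {M : Rel n} (hM : IsDissipativeRel M) : Module.finrank ℂ M ≤ n := by
  have := LinearMap.finrank_le_finrank_of_injective (inj_on_dissipative hM)
  rwa [Module.finrank_fintype_fun_eq_card, Fintype.card_fin] at this

lemma map_eq_top_of_max {n : ℕ} {M : Rel n} (hM : IsDissipativeRel M)
    (hmax : ∀ M' : Rel n, IsDissipativeRel M' → M ≤ M' → M = M') :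
    M.map (pi' n) = ⊤ := by
  by_contra hS
  obtain ⟨v, hv0, hv⟩ := exists_orth _ hS
  set M' : Rel n := M ⊔ Submodule.span ℂ {((v, -v) : (Fin n → ℂ) × (Fin n → ℂ))} with hM'def
  have hdiss : IsDissipativeRel M' := by
    intro p hp
    rcases Submodule.mem_sup.mp hp with ⟨m, hm, q, hq, rfl⟩
    rcases Submodule.mem_span_singleton.mp hq with ⟨c, rfl⟩
    have hp1 : (m + c • ((v, -v) : (Fin n → ℂ) × (Fin n → ℂ))).1 = m.1 + c • v := rfl
    have hp2 : (m + c • ((v, -v) : (Fin n → ℂ) × (Fin n → ℂ))).2 = m.2 + c • (-v) := rfl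
    rw [hp1, hp2]
    have hBeq : ip m.1 v = ip m.2 v := by
      have h0 := hv (m.1 - m.2) (Submodule.mem_map.mpr ⟨m, hm, rfl⟩)
      have : ip m.1 v - ip m.2 v = 0 := by
        simpa [ip, star_sub, sub_dotProduct] using h0
      exact sub_eq_zero.mp this
    have expand : ip (m.1 + c • v) (m.2 + c • (-v)) =
        ip m.1 m.2 - c * ip m.1 v + starRingEnd ℂ c * ip v m.2
          - starRingEnd ℂ c * (c * ip v v) := by
      simp only [ip, star_add, star_smul, add_dotProduct, dotProduct_add, smul_dotProduct,
        dotProduct_smul, dotProduct_neg, neg_dotProduct, smul_eq_mul, star_trivial,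
        RCLike.star_def]
      ring
    have h4 : starRingEnd ℂ c * (c * ip v v) =
        ((Complex.normSq c * ∑ i, Complex.normSq (v i) : ℝ) : ℂ) := by
      rw [ip_self_eq, ← mul_assoc, mul_comm (starRingEnd ℂ c) c, Complex.mul_conj,
        ← Complex.ofReal_mul]
    have hre : (ip (m.1 + c • v) (m.2 + c • (-v))).re =
        (ip m.1 m.2).re - Complex.normSq c * ∑ i, Complex.normSq (v i) := by
      rw [expand, h4, ip_conj v m.2, ← hBeq]
      simp only [Complex.sub_re, Complex.add_re, ← RingHom.map_mul, Complex.conj_re,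
        Complex.ofReal_re]
      ring
    rw [hre]
    have hA := hM m hm
    have hC : 0 ≤ Complex.normSq c * ∑ i, Complex.normSq (v i) :=
      mul_nonneg (Complex.normSq_nonneg _) (Finset.sum_nonneg fun i _ => Complex.normSq_nonneg _)
    linarith
  have heq := hmax M' hdiss le_sup_left
  have hmem : ((v, -v) : (Fin n → ℂ) × (Fin n → ℂ)) ∈ M := by
    rw [heq]; exact Submodule.mem_sup_right (Submodule.mem_span_singleton_self _)
  have h0 := hv (v - -v) (Submodule.mem_map.mpr ⟨(v, -v), hmem, rfl⟩)
  have h1 : ip v v + ip v v = 0 := by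
    simpa [ip, sub_neg_eq_add, star_add, add_dotProduct] using h0
  have h2 : ip v v = 0 := by
    have := add_self_eq_zero.mp h1
    exact this
  exact hv0 (eq_zero_of_ip_self_re v (by rw [h2]; simp))

end Stmt6Aux

open PHDAE in
/-- a dissipative relation is maximally dissipative iff `dim M = n`. -/
theorem stmt_6 {n : ℕ} (M : Rel n) (hM : IsDissipativeRel M) :
    IsMaxDissipativeRel M ↔ Module.finrank ℂ M = n := by
  constructor
  · rintro ⟨_, hmax⟩
    rw [Stmt6Aux.finrank_eq_map hM, Stmt6Aux.map_eq_top_of_max hM hmax, finrank_top,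
      Module.finrank_fintype_fun_eq_card, Fintype.card_fin]
  · intro hr
    refine ⟨hM, fun M' hM' hle => ?_⟩
    have h1 : Module.finrank ℂ M' ≤ n := Stmt6Aux.finrank_le_n hM'
    exact Submodule.eq_of_le_of_finrank_le hle (by rw [hr]; exact h1)
end

section
/- A dissipative linear relation M on K^n is maximally dissipative if and only if dom M = (mul M)^⊥, if and only if ran M = (ker M)^⊥. -/
open Matrix
open scoped ComplexOrder

open PHDAE Module
set_option synthInstance.maxHeartbeats 400000
set_option maxHeartbeats 1000000

section Aux
variable {n : ℕ}

lemma ip_eq_inner (x y : Fin n → ℂ) :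
    ip x y = @inner ℂ (EuclideanSpace ℂ (Fin n)) _ (WithLp.toLp 2 x) (WithLp.toLp 2 y) := by
  simp [ip, dotProduct, PiLp.inner_apply, RCLike.inner_apply, mul_comm]

lemma orth_eq_orthogonal (S : Submodule ℂ (Fin n → ℂ)) :
    orth S = ((S.map (WithLp.linearEquiv 2 ℂ (Fin n → ℂ)).symm.toLinearMap)ᗮ).comap
      (WithLp.linearEquiv 2 ℂ (Fin n → ℂ)).symm.toLinearMap := by
  ext y
  show (∀ x ∈ S, ip x y = 0) ↔ _
  simp only [Submodule.mem_comap, Submodule.mem_orthogonal, Submodule.mem_map]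
  constructor
  · rintro h _ ⟨x, hx, rfl⟩; have := h x hx; rw [ip_eq_inner] at this; exact this
  · intro h x hx; rw [ip_eq_inner]; exact h _ ⟨x, hx, rfl⟩

lemma finrank_add_finrank_orth (S : Submodule ℂ (Fin n → ℂ)) :
    finrank ℂ S + finrank ℂ (orth S) = n := by
  rw [orth_eq_orthogonal]
  have := Submodule.finrank_add_finrank_orthogonal
    (K := S.map (WithLp.linearEquiv 2 ℂ (Fin n → ℂ)).symm.toLinearMap)
  rw [Submodule.comap_equiv_eq_map_symm, LinearEquiv.finrank_map_eq]
  simp only [finrank_euclideanSpace, Fintype.card_fin, LinearEquiv.finrank_map_eq] at this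
  exact this

end Aux

section Aux2
variable {n : ℕ}

/-- rank-nullity: dim dom + dim mul = dim M -/
lemma finrank_dom_add_mul (M : Rel n) :
    finrank ℂ (domRel M) + finrank ℂ (mulRel M) = finrank ℂ M := by
  let f : M →ₗ[ℂ] (Fin n → ℂ) := (LinearMap.fst ℂ _ _).comp M.subtype
  have hrange : LinearMap.range f = domRel M := by
    rw [LinearMap.range_comp, Submodule.range_subtype]; rfl
  -- ker f ≃ mulRel M
  have hker : finrank ℂ (LinearMap.ker f) = finrank ℂ (mulRel M) := by
    let g : LinearMap.ker f →ₗ[ℂ] mulRel M :=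
      LinearMap.codRestrict _ ((LinearMap.snd ℂ _ _).comp (M.subtype.comp (LinearMap.ker f).subtype))
        (by
          rintro ⟨⟨⟨x, y⟩, hxy⟩, hx⟩
          have hx0 : x = 0 := hx
          simp only [mulRel, Submodule.mem_comap, LinearMap.coe_comp, Function.comp_apply]
          simpa [hx0] using hxy)
    have hbij : Function.Bijective g := by
      constructor
      · rintro ⟨⟨⟨x, y⟩, hxy⟩, hx⟩ ⟨⟨⟨x', y'⟩, hxy'⟩, hx'⟩ h
        have hy : y = y' := congrArg Subtype.val h
        have hx0 : x = 0 := hx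
        have hx0' : x' = 0 := hx'
        ext <;> simp [hx0, hx0', hy]
      · rintro ⟨y, hy⟩
        refine ⟨⟨⟨(0, y), hy⟩, rfl⟩, rfl⟩
    exact (LinearEquiv.ofBijective g hbij).finrank_eq
  have := LinearMap.finrank_range_add_finrank_ker f
  rw [hrange, hker] at this
  exact this

lemma finrank_ran_add_ker (M : Rel n) :
    finrank ℂ (ranSRel M) + finrank ℂ (kerSRel M) = finrank ℂ M := by
  let f : M →ₗ[ℂ] (Fin n → ℂ) := (LinearMap.snd ℂ _ _).comp M.subtype
  have hrange : LinearMap.range f = ranSRel M := by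
    rw [LinearMap.range_comp, Submodule.range_subtype]; rfl
  have hker : finrank ℂ (LinearMap.ker f) = finrank ℂ (kerSRel M) := by
    let g : LinearMap.ker f →ₗ[ℂ] kerSRel M :=
      LinearMap.codRestrict _ ((LinearMap.fst ℂ _ _).comp (M.subtype.comp (LinearMap.ker f).subtype))
        (by
          rintro ⟨⟨⟨x, y⟩, hxy⟩, hy⟩
          have hy0 : y = 0 := hy
          simp only [kerSRel, Submodule.mem_comap, LinearMap.coe_comp, Function.comp_apply]
          simpa [hy0] using hxy)
    have hbij : Function.Bijective g := by
      constructor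
      · rintro ⟨⟨⟨x, y⟩, hxy⟩, hy⟩ ⟨⟨⟨x', y'⟩, hxy'⟩, hy'⟩ h
        have hx : x = x' := congrArg Subtype.val h
        have hy0 : y = 0 := hy
        have hy0' : y' = 0 := hy'
        ext <;> simp [hy0, hy0', hx]
      · rintro ⟨x, hx⟩
        refine ⟨⟨⟨(x, 0), hx⟩, rfl⟩, rfl⟩
    exact (LinearEquiv.ofBijective g hbij).finrank_eq
  have := LinearMap.finrank_range_add_finrank_ker f
  rw [hrange, hker] at this
  exact this

end Aux2

section Aux3
variable {n : ℕ}

lemma mem_orth_iff {S : Submodule ℂ (Fin n → ℂ)} {y : Fin n → ℂ} :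
    y ∈ orth S ↔ ∀ x ∈ S, ip x y = 0 := Iff.rfl

lemma ip_conj (x y : Fin n → ℂ) : ip y x = starRingEnd ℂ (ip x y) := by
  simp [ip, dotProduct, Finset.sum_comm, map_sum, mul_comm]

lemma ip_add_right (x y z : Fin n → ℂ) : ip x (y + z) = ip x y + ip x z := by
  simp [ip, dotProduct_add]

lemma ip_smul_right (c : ℂ) (x y : Fin n → ℂ) : ip x (c • y) = c * ip x y := by
  simp [ip]

lemma ip_add_left (x y z : Fin n → ℂ) : ip (x + y) z = ip x z + ip y z := by
  simp [ip, add_dotProduct]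

lemma ip_smul_left (c : ℂ) (x y : Fin n → ℂ) : ip (c • x) y = starRingEnd ℂ c * ip x y := by
  simp [ip, smul_dotProduct, Complex.star_def]

lemma ip_self_re (x : Fin n → ℂ) : (ip x x).re = ∑ i, Complex.normSq (x i) := by
  simp [ip, dotProduct, Complex.re_sum, Complex.mul_re, Complex.normSq_apply]

lemma ip_self_re_nonneg (x : Fin n → ℂ) : 0 ≤ (ip x x).re := by
  rw [ip_self_re]
  exact Finset.sum_nonneg fun i _ => Complex.normSq_nonneg _

lemma eq_zero_of_ip_self_re (x : Fin n → ℂ) (h : (ip x x).re ≤ 0) : x = 0 := by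
  have h2 : ∑ i, Complex.normSq (x i) = 0 := by
    have := ip_self_re_nonneg x
    rw [ip_self_re] at *
    linarith
  funext i
  have := (Finset.sum_eq_zero_iff_of_nonneg
    (fun i _ => Complex.normSq_nonneg (x i))).mp h2 i (Finset.mem_univ i)
  exact Complex.normSq_eq_zero.mp this

end Aux3

section Aux4
variable {n : ℕ}

lemma dissip_dom_le {M : Rel n} (hM : IsDissipativeRel M) :
    domRel M ≤ orth (mulRel M) := by
  rintro x ⟨⟨x', w⟩, hmem, rfl⟩
  simp only [LinearMap.fst_apply]
  rw [mem_orth_iff]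
  intro z hz
  have hz' : ((0 : Fin n → ℂ), z) ∈ M := hz
  -- show ip z x' = 0 ;  set c := ip x' z
  suffices hcz0 : ip x' z = 0 by rw [ip_conj, hcz0, map_zero]
  set c := ip x' z with hc
  by_contra hcz
  have hnsq : 0 < Complex.normSq c := Complex.normSq_pos.mpr hcz
  set a := (ip x' w).re with ha
  set t : ℝ := (1 - a) / Complex.normSq c with ht
  have hmem2 : ((x', w) + ((t : ℂ) * starRingEnd ℂ c) • ((0 : Fin n → ℂ), z)) ∈ M :=
    M.add_mem hmem (M.smul_mem _ hz')
  have hre := hM _ hmem2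
  simp only [Prod.fst_add, Prod.snd_add, Prod.smul_mk, smul_zero, add_zero] at hre
  rw [ip_add_right, ip_smul_right] at hre
  have hval : ((t : ℂ) * starRingEnd ℂ c * c) = ((t * Complex.normSq c : ℝ) : ℂ) := by
    rw [mul_assoc, ← Complex.normSq_eq_conj_mul_self, Complex.ofReal_mul]
  rw [hval] at hre
  have htv : t * Complex.normSq c = 1 - a := by
    rw [ht]; field_simp
  simp only [Complex.add_re, Complex.ofReal_re, htv] at hre
  rw [← ha] at hre
  linarith

lemma dissip_ran_le {M : Rel n} (hM : IsDissipativeRel M) :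
    ranSRel M ≤ orth (kerSRel M) := by
  rintro y ⟨⟨v, y'⟩, hmem, rfl⟩
  simp only [LinearMap.snd_apply]
  rw [mem_orth_iff]
  intro z hz
  have hz' : (z, (0 : Fin n → ℂ)) ∈ M := hz
  set c := ip z y' with hc
  by_contra hcz
  have hnsq : 0 < Complex.normSq c := Complex.normSq_pos.mpr hcz
  set a := (ip v y').re with ha
  set t : ℝ := (1 - a) / Complex.normSq c with ht
  have hmem2 : ((v, y') + ((t : ℂ) * c) • (z, (0 : Fin n → ℂ))) ∈ M :=
    M.add_mem hmem (M.smul_mem _ hz')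
  have hre := hM _ hmem2
  simp only [Prod.fst_add, Prod.snd_add, Prod.smul_mk, smul_zero, add_zero] at hre
  rw [ip_add_left, ip_smul_left] at hre
  have hval : (starRingEnd ℂ ((t : ℂ) * c) * c) = ((t * Complex.normSq c : ℝ) : ℂ) := by
    rw [_root_.map_mul, Complex.conj_ofReal, mul_assoc, ← Complex.normSq_eq_conj_mul_self,
      Complex.ofReal_mul]
  rw [hval] at hre
  have htv : t * Complex.normSq c = 1 - a := by rw [ht]; field_simp
  simp only [Complex.add_re, Complex.ofReal_re, htv] at hre
  rw [← ha] at hre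
  linarith

end Aux4

section Aux5
variable {n : ℕ}

/-- the difference map (x,y) ↦ x − y restricted to M -/
noncomputable def diffMap (M : Rel n) : M →ₗ[ℂ] (Fin n → ℂ) :=
  ((LinearMap.fst ℂ (Fin n → ℂ) (Fin n → ℂ)) - (LinearMap.snd ℂ _ _)).comp M.subtype

lemma diffMap_injective {M : Rel n} (hM : IsDissipativeRel M) :
    Function.Injective (diffMap M) := by
  rw [← LinearMap.ker_eq_bot, LinearMap.ker_eq_bot']
  rintro ⟨⟨x, y⟩, hxy⟩ h
  have hd : x - y = 0 := h
  have hyx : y = x := (sub_eq_zero.mp hd).symm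
  have hre : (ip x y).re ≤ 0 := hM _ hxy
  rw [hyx] at hre hxy
  have hx0 : x = 0 := eq_zero_of_ip_self_re x hre
  apply Subtype.ext
  simp [hx0, hyx]

lemma finrank_le_of_dissip {M : Rel n} (hM : IsDissipativeRel M) :
    finrank ℂ M ≤ n := by
  have := LinearMap.finrank_le_finrank_of_injective (diffMap_injective hM)
  simpa using this

lemma exists_ext {M : Rel n} (hM : IsDissipativeRel M) (h : finrank ℂ M < n) :
    ∃ M' : Rel n, IsDissipativeRel M' ∧ M ≤ M' ∧ M ≠ M' := by
  set W := LinearMap.range (diffMap M) with hW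
  have hrkW : finrank ℂ W = finrank ℂ M :=
    LinearMap.finrank_range_of_inj (diffMap_injective hM)
  have horthW : orth W ≠ ⊥ := by
    intro hbot
    have h0 : finrank ℂ (orth W) = 0 := by rw [hbot]; exact finrank_bot ℂ _
    have := finrank_add_finrank_orth W
    omega
  obtain ⟨u, hu, hu0⟩ := Submodule.exists_mem_ne_zero_of_ne_bot horthW
  have huW : ∀ p : (Fin n → ℂ) × (Fin n → ℂ), p ∈ M → ip (p.1 - p.2) u = 0 := by
    intro p hp
    exact hu _ ⟨⟨p, hp⟩, rfl⟩
  refine ⟨M ⊔ (ℂ ∙ ((u, -u) : (Fin n → ℂ) × (Fin n → ℂ))), ?_, le_sup_left, ?_⟩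
  · -- dissipative
    rintro p hp
    rw [Submodule.mem_sup] at hp
    obtain ⟨m, hm, s, hs, rfl⟩ := hp
    rw [Submodule.mem_span_singleton] at hs
    obtain ⟨lam, rfl⟩ := hs
    obtain ⟨x, y⟩ := m
    set c := ip x u with hc
    have hcy : ip y u = c := by
      have h0 := huW (x, y) hm
      have h2 : ip ((x, y).1 - (x, y).2) u = ip x u - ip y u := by
        simp [ip, sub_dotProduct]
      rw [h2] at h0
      rw [hc]; linear_combination -h0
    have hexp : ip ((x, y) + lam • (u, -u)).1 ((x, y) + lam • (u, -u)).2
        = ip x y + (starRingEnd ℂ (lam * c) - lam * c)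
          - (Complex.normSq lam : ℂ) * ip u u := by
      simp only [Prod.fst_add, Prod.snd_add, Prod.smul_mk, smul_neg]
      rw [show y + -(lam • u) = y + (-lam) • u by simp [neg_smul]]
      rw [ip_add_left, ip_add_right, ip_add_right, ip_smul_left, ip_smul_right,
        ip_smul_right, ip_smul_left]
      have h1 : ip u y = starRingEnd ℂ (ip y u) := ip_conj y u
      rw [h1, hcy, ← hc]
      have h2 : starRingEnd ℂ lam * lam = (Complex.normSq lam : ℂ) := by
        rw [← Complex.normSq_eq_conj_mul_self]
      ring_nf
      rw [mul_comm lam (starRingEnd ℂ lam), h2]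
      rw [← _root_.map_mul]
      ring
    rw [hexp]
    have hre1 : (starRingEnd ℂ (lam * c) - lam * c).re = 0 := by
      simp [Complex.sub_re, Complex.conj_re]
    have hre2 : ((Complex.normSq lam : ℂ) * ip u u).re
        = Complex.normSq lam * (ip u u).re := by
      simp [Complex.mul_re]
    have hre3 : 0 ≤ Complex.normSq lam * (ip u u).re :=
      mul_nonneg (Complex.normSq_nonneg _) (ip_self_re_nonneg u)
    have hre4 : (ip x y).re ≤ 0 := hM _ hm
    simp only [Complex.add_re, Complex.sub_re, hre1]
    rw [Complex.sub_re] at hre1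
    rw [hre2]
    linarith
  · -- strict
    intro heq
    have hmem : ((u, -u) : (Fin n → ℂ) × (Fin n → ℂ)) ∈ M := by
      rw [heq]
      exact Submodule.mem_sup_right (Submodule.mem_span_singleton_self _)
    have := huW (u, -u) hmem
    simp only [sub_neg_eq_add] at this
    rw [ip_add_left] at this
    have h2 : ip u u = 0 := by linear_combination this / 2
    exact hu0 (eq_zero_of_ip_self_re u (by rw [h2]; simp))

lemma max_iff_finrank {M : Rel n} (hM : IsDissipativeRel M) :
    IsMaxDissipativeRel M ↔ finrank ℂ M = n := by
  constructor
  · intro hmax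
    rcases lt_or_eq_of_le (finrank_le_of_dissip hM) with hlt | heq
    · obtain ⟨M', hM', hle, hne⟩ := exists_ext hM hlt
      exact absurd (hmax.2 M' hM' hle) hne
    · exact heq
  · intro hfr
    refine ⟨hM, fun M' hM' hle => Submodule.eq_of_le_of_finrank_le hle ?_⟩
    rw [hfr]
    exact finrank_le_of_dissip hM'

end Aux5

open PHDAE in
/-- a dissipative relation is maximally dissipative iff `dom M = (mul M)^⊥`,
iff `ran M = (ker M)^⊥`. -/
theorem stmt_9 {n : ℕ} (M : Rel n) (hM : IsDissipativeRel M) :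
    (IsMaxDissipativeRel M ↔ domRel M = orth (mulRel M)) ∧
    (IsMaxDissipativeRel M ↔ ranSRel M = orth (kerSRel M)) := by
  constructor
  · rw [max_iff_finrank hM]
    constructor
    · intro hfr
      refine Submodule.eq_of_le_of_finrank_le (dissip_dom_le hM) ?_
      have h1 := finrank_dom_add_mul M
      have h2 := finrank_add_finrank_orth (mulRel M)
      omega
    · intro heq
      have h1 := finrank_dom_add_mul M
      have h2 := finrank_add_finrank_orth (mulRel M)
      rw [heq] at h1
      omega
  · rw [max_iff_finrank hM]
    constructor
    · intro hfr
      refine Submodule.eq_of_le_of_finrank_le (dissip_ran_le hM) ?_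
      have h1 := finrank_ran_add_ker M
      have h2 := finrank_add_finrank_orth (kerSRel M)
      omega
    · intro heq
      have h1 := finrank_ran_add_ker M
      have h2 := finrank_add_finrank_orth (kerSRel M)
      rw [heq] at h1
      omega
end

section
/- A matrix pencil sE − A ∈ K[s]^{n×n} is positive real if and only if E = E* ≥ 0 and A + A* ≤ 0. -/
open Matrix
open scoped ComplexOrder

lemma qform_conjTranspose {n : ℕ} (M : Matrix (Fin n) (Fin n) ℂ) (x : Fin n → ℂ) :
    star x ⬝ᵥ Mᴴ *ᵥ x = star (star x ⬝ᵥ M *ᵥ x) := by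
  rw [star_dotProduct, star_mulVec, conjTranspose_conjTranspose, ← dotProduct_mulVec]

lemma herm_of_real {n : ℕ} (M : Matrix (Fin n) (Fin n) ℂ)
    (h : ∀ x : Fin n → ℂ, (star x ⬝ᵥ M *ᵥ x).im = 0) : M.IsHermitian := by
  rw [Matrix.isHermitian_iff_isSymmetric, LinearMap.isSymmetric_iff_inner_map_self_real,
    (WithLp.equiv 2 (Fin n → ℂ)).symm.surjective.forall]
  intro x
  simp only [WithLp.equiv_symm_apply, toEuclideanLin_apply_piLp_toLp, EuclideanSpace.inner_toLp_toLp, dotProduct_comm _ (star _)]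
  have h2 : star (M *ᵥ x) ⬝ᵥ x = star (star x ⬝ᵥ M *ᵥ x) := by
    rw [star_dotProduct]
  rw [h2, starRingEnd_apply, star_star]
  exact ((Complex.conj_eq_iff_im).2 (h x)).symm

lemma qform_pencil {n : ℕ} (E A : Matrix (Fin n) (Fin n) ℂ) (μ : ℂ) (x : Fin n → ℂ) :
    star x ⬝ᵥ ((μ • E - A) + (μ • E - A)ᴴ) *ᵥ x =
      (μ * (star x ⬝ᵥ E *ᵥ x) - star x ⬝ᵥ A *ᵥ x) +
        star (μ * (star x ⬝ᵥ E *ᵥ x) - star x ⬝ᵥ A *ᵥ x) := by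
  rw [add_mulVec, dotProduct_add, qform_conjTranspose]
  congr 2 <;>
  simp [sub_mulVec, smul_mulVec, dotProduct_sub, dotProduct_smul, smul_eq_mul]


open PHDAE Matrix in
/-- the pencil `sE − A` is positive real iff `E = E* ≥ 0` and `A + A* ≤ 0`.
Since a pencil is a matrix polynomial it has no poles at all, so condition (a) of
positive realness is automatic and positive realness amounts to
`(μE − A) + (μE − A)* ≥ 0` for all `μ` in the open right half-plane. -/
theorem stmt_13 {n : ℕ} (E A : Matrix (Fin n) (Fin n) ℂ) :
    (∀ μ : ℂ, 0 < μ.re → ((μ • E - A) + (μ • E - A)ᴴ).PosSemidef) ↔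
      E.PosSemidef ∧ (-(A + Aᴴ)).PosSemidef := by
  constructor
  · intro h
    have key : ∀ (x : Fin n → ℂ) (t s : ℝ), 0 < t →
        (star x ⬝ᵥ A *ᵥ x).re ≤ t * (star x ⬝ᵥ E *ᵥ x).re - s * (star x ⬝ᵥ E *ᵥ x).im := by
      intro x t s ht
      have h0 := (h ⟨t, s⟩ (by simpa)).dotProduct_mulVec_nonneg x
      rw [qform_pencil] at h0
      have hre := (Complex.nonneg_iff.mp h0).1
      set z := (⟨t, s⟩ : ℂ) * (star x ⬝ᵥ E *ᵥ x) - star x ⬝ᵥ A *ᵥ x with hz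
      rw [Complex.add_re, Complex.star_def, Complex.conj_re, hz, Complex.sub_re,
        Complex.mul_re] at hre
      have e1 : ((⟨t, s⟩ : ℂ)).re = t := rfl
      have e2 : ((⟨t, s⟩ : ℂ)).im = s := rfl
      rw [e1, e2] at hre
      linarith
    have hIm : ∀ x : Fin n → ℂ, (star x ⬝ᵥ E *ᵥ x).im = 0 := by
      intro x
      by_contra him
      set a := star x ⬝ᵥ E *ᵥ x
      set d := star x ⬝ᵥ A *ᵥ x
      have hk := key x 1 ((a.re - d.re + 1) / a.im) one_pos
      rw [div_mul_cancel₀ _ him] at hk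
      linarith
    have hRe : ∀ x : Fin n → ℂ, 0 ≤ (star x ⬝ᵥ E *ᵥ x).re := by
      intro x
      by_contra hre
      push_neg at hre
      set a := star x ⬝ᵥ E *ᵥ x
      set d := star x ⬝ᵥ A *ᵥ x
      have hane : a.re ≠ 0 := hre.ne
      have ht : (0:ℝ) < (|d.re| + 1) / (-a.re) := by
        apply div_pos (by positivity) (by linarith)
      have hk := key x _ 0 ht
      have h2 : (|d.re| + 1) / (-a.re) * a.re = -(|d.re| + 1) := by
        rw [div_neg, neg_mul, div_mul_cancel₀ _ hane]
      rw [h2] at hk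
      have := neg_abs_le d.re
      linarith
    have hAre : ∀ x : Fin n → ℂ, (star x ⬝ᵥ A *ᵥ x).re ≤ 0 := by
      intro x
      by_contra hd
      push_neg at hd
      set a := star x ⬝ᵥ E *ᵥ x
      set d := star x ⬝ᵥ A *ᵥ x
      have ha := hRe x
      have ht : (0:ℝ) < d.re / (2 * (a.re + 1)) := by positivity
      have hk := key x _ 0 ht
      have h2 : d.re / (2 * (a.re + 1)) * (a.re + 1) = d.re / 2 := by
        have hne : a.re + 1 ≠ 0 := by have : 0 ≤ a.re := ha; linarith
        field_simp
      nlinarith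
    refine ⟨PosSemidef.of_dotProduct_mulVec_nonneg (herm_of_real E hIm) fun x => Complex.nonneg_iff.2 ⟨hRe x, (hIm x).symm⟩, PosSemidef.of_dotProduct_mulVec_nonneg ?_ ?_⟩
    · show (-(A + Aᴴ))ᴴ = -(A + Aᴴ)
      rw [conjTranspose_neg, conjTranspose_add, conjTranspose_conjTranspose, add_comm]
    · intro x
      have hq : star x ⬝ᵥ (-(A + Aᴴ)) *ᵥ x =
          -(star x ⬝ᵥ A *ᵥ x + star (star x ⬝ᵥ A *ᵥ x)) := by
        simp [neg_mulVec, add_mulVec, qform_conjTranspose]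
      rw [hq]
      refine Complex.nonneg_iff.2 ⟨?_, ?_⟩
      · have := hAre x
        simp only [Complex.neg_re, Complex.add_re, Complex.star_def, Complex.conj_re]
        linarith
      · simp [Complex.star_def]
  · rintro ⟨hE, hA⟩ μ hμ
    refine PosSemidef.of_dotProduct_mulVec_nonneg ?_ ?_
    · show ((μ • E - A) + (μ • E - A)ᴴ)ᴴ = _
      rw [conjTranspose_add, conjTranspose_conjTranspose, add_comm]
    · intro x
      rw [qform_pencil]
      have ha := Complex.nonneg_iff.mp (hE.dotProduct_mulVec_nonneg x)
      have hd := Complex.nonneg_iff.mp (hA.dotProduct_mulVec_nonneg x)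
      have hq : star x ⬝ᵥ (-(A + Aᴴ)) *ᵥ x =
          -(star x ⬝ᵥ A *ᵥ x + star (star x ⬝ᵥ A *ᵥ x)) := by
        simp [neg_mulVec, add_mulVec, qform_conjTranspose]
      rw [hq] at hd
      set a := star x ⬝ᵥ E *ᵥ x
      set d := star x ⬝ᵥ A *ᵥ x
      have haim : a.im = 0 := ha.2.symm
      have hdre : d.re ≤ 0 := by
        have h1 := hd.1
        simp only [Complex.neg_re, Complex.add_re, Complex.star_def, Complex.conj_re] at h1
        linarith
      refine Complex.nonneg_iff.2 ⟨?_, ?_⟩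
      · simp only [Complex.add_re, Complex.sub_re, Complex.mul_re, Complex.star_def,
          Complex.conj_re, haim, mul_zero, sub_zero]
        linarith [mul_nonneg hμ.le ha.1]
      · simp only [Complex.add_im, Complex.sub_im, Complex.mul_im, Complex.star_def,
          Complex.conj_im]
        ring
end

section
/- Let E, D, Q ∈ K^{n×n} with Q*E = E*Q and D + D* ≤ 0. If the pencil sE − DQ is regular, then the pencil sE − Q is regular, and equivalently the linear relation L = ran[E; Q] has dimension n (i.e., L is self-adjoint). -/
open Matrix
open scoped ComplexOrder

open Matrix in
private lemma pencilDet_eval {n : ℕ} (E A : Matrix (Fin n) (Fin n) ℂ) (s : ℂ) :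
    (PHDAE.pencilDet E A).eval s = (s • E - A).det := by
  have h := RingHom.map_det (Polynomial.evalRingHom s)
    ((Polynomial.X : Polynomial ℂ) • E.map Polynomial.C - A.map Polynomial.C)
  rw [PHDAE.pencilDet]
  rw [show Polynomial.eval s = ⇑(Polynomial.evalRingHom s) from rfl] at *
  rw [h]
  congr 1
  ext i j
  simp [Matrix.map_apply, Matrix.sub_apply, Matrix.smul_apply, smul_eq_mul]
  ring

open Matrix in
private lemma dot_key {n : ℕ} (A B : Matrix (Fin n) (Fin n) ℂ) (z w : Fin n → ℂ) :
    star (A *ᵥ z) ⬝ᵥ (B *ᵥ w) = star z ᵥ* (Aᴴ * B) ⬝ᵥ w := by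
  rw [star_mulVec, dotProduct_mulVec, vecMul_vecMul]

open PHDAE Matrix in
/-- if `Q*E = E*Q`, `D + D* ≤ 0` and `sE − DQ` is regular, then `sE − Q`
is regular and the relation `ran [E; Q]` has dimension `n` (hence is self-adjoint). -/
theorem stmt_14 {n : ℕ} (E D Q : Matrix (Fin n) (Fin n) ℂ)
    (hsym : Qᴴ * E = Eᴴ * Q) (hdiss : (-(D + Dᴴ)).PosSemidef)
    (hreg : PencilRegular E (D * Q)) :
    PencilRegular E Q ∧ Module.finrank ℂ (ranRel E Q) = n ∧
      IsSelfAdjointRel (ranRel E Q) := by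
  classical
  -- step 1: trivial common kernel
  have hker : ∀ x : Fin n → ℂ, E *ᵥ x = 0 → Q *ᵥ x = 0 → x = 0 := by
    intro x hE hQ
    by_contra hx
    apply hreg
    apply Polynomial.funext
    intro s
    rw [pencilDet_eval, Polynomial.eval_zero]
    apply Matrix.exists_mulVec_eq_zero_iff.mp
    refine ⟨x, hx, ?_⟩
    rw [Matrix.sub_mulVec, smul_mulVec, ← Matrix.mulVec_mulVec, hE, hQ]
    simp
  -- the range map
  set g : (Fin n → ℂ) →ₗ[ℂ] (Fin n → ℂ) × (Fin n → ℂ) :=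
    (Matrix.mulVecLin E).prod (Matrix.mulVecLin Q) with hg
  have hg_inj : Function.Injective g := by
    rw [← LinearMap.ker_eq_bot]
    ext x
    simp only [LinearMap.mem_ker, Submodule.mem_bot, hg, LinearMap.prod_apply,
      Function.prod, Matrix.mulVecLin_apply, Prod.mk_eq_zero]
    constructor
    · rintro ⟨h1, h2⟩; exact hker x h1 h2
    · rintro rfl; simp
  have hfinL : Module.finrank ℂ (ranRel E Q) = n := by
    have := LinearMap.finrank_range_of_inj hg_inj
    rw [Module.finrank_pi, Fintype.card_fin] at this
    exact this
  -- step 2: regularity of sE - Q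
  have hregQ : PencilRegular E Q := by
    intro h0
    have hdet : (Complex.I • E - Q).det = 0 := by
      have := pencilDet_eval E Q Complex.I
      rw [h0, Polynomial.eval_zero] at this
      exact this.symm
    obtain ⟨x, hx, hx0⟩ := Matrix.exists_mulVec_eq_zero_iff.mpr hdet
    rw [Matrix.sub_mulVec, smul_mulVec, sub_eq_zero] at hx0
    -- hx0 : Complex.I • E *ᵥ x = Q *ᵥ x
    have hkey : star (Q *ᵥ x) ⬝ᵥ (E *ᵥ x) = star (E *ᵥ x) ⬝ᵥ (Q *ᵥ x) := by
      rw [dot_key, dot_key, hsym]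
    rw [← hx0, star_smul, smul_dotProduct, dotProduct_smul] at hkey
    have hv : star (E *ᵥ x) ⬝ᵥ (E *ᵥ x) = 0 := by
      have h2 : (star Complex.I - Complex.I) • (star (E *ᵥ x) ⬝ᵥ (E *ᵥ x)) = 0 := by
        rw [sub_smul, hkey, sub_self]
      have h3 : (star Complex.I - Complex.I) ≠ 0 := by
        simp only [Complex.star_def, ← Complex.conj_eq_iff_im, sub_ne_zero]
        intro h
        have := congrArg Complex.im h
        norm_num [Complex.I_im] at this
      exact (smul_eq_zero.mp h2).resolve_left h3
    have hE0 : E *ᵥ x = 0 := dotProduct_star_self_eq_zero.mp hv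
    have hQ0 : Q *ᵥ x = 0 := by rw [← hx0, hE0, smul_zero]
    exact hx (hker x hE0 hQ0)
  refine ⟨hregQ, hfinL, ?_⟩
  -- step 3: self-adjointness
  set f : ((Fin n → ℂ) × (Fin n → ℂ)) →ₗ[ℂ] (Fin n → ℂ) :=
    (Matrix.mulVecLin Qᴴ).coprod (-(Matrix.mulVecLin Eᴴ)) with hf
  have hle : ranRel E Q ≤ adj (ranRel E Q) := by
    rintro ⟨a, b⟩ ha
    obtain ⟨z, hz⟩ := ha
    rintro ⟨c, d⟩ ⟨w, hw⟩
    simp only [LinearMap.prod_apply, Function.prod, Matrix.mulVecLin_apply, Prod.mk.injEq] at hz hw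
    simp only [ip]
    rw [← hz.1, ← hz.2, ← hw.1, ← hw.2, dot_key, dot_key, hsym]
  have hadj : adj (ranRel E Q) = LinearMap.ker f := by
    apply le_antisymm
    · rintro ⟨x, y⟩ hxy
      have hcond : ∀ w : Fin n → ℂ, star x ⬝ᵥ (Q *ᵥ w) = star y ⬝ᵥ (E *ᵥ w) := by
        intro w
        exact hxy ((E *ᵥ w, Q *ᵥ w)) ⟨w, rfl⟩
      have heq : Qᴴ *ᵥ x = Eᴴ *ᵥ y := by
        have : ∀ w : Fin n → ℂ, star (Qᴴ *ᵥ x) ⬝ᵥ w = star (Eᴴ *ᵥ y) ⬝ᵥ w := by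
          intro w
          rw [star_mulVec, star_mulVec, conjTranspose_conjTranspose,
            conjTranspose_conjTranspose, ← dotProduct_mulVec, ← dotProduct_mulVec]
          exact hcond w
        have h2 : star (Qᴴ *ᵥ x) = star (Eᴴ *ᵥ y) := by
          funext i
          have := this (Pi.single i 1)
          simpa [dotProduct_single] using this
        exact star_injective h2
      simp only [LinearMap.mem_ker, hf, LinearMap.coprod_apply, LinearMap.neg_apply,
        Matrix.mulVecLin_apply]
      rw [heq]; abel
    · rintro ⟨x, y⟩ hxy
      simp only [LinearMap.mem_ker, hf, LinearMap.coprod_apply, LinearMap.neg_apply,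
        Matrix.mulVecLin_apply, add_neg_eq_zero] at hxy
      rintro ⟨c, d⟩ ⟨w, hw⟩
      simp only [LinearMap.prod_apply, Function.prod, Matrix.mulVecLin_apply, Prod.mk.injEq] at hw
      simp only [ip]
      rw [← hw.1, ← hw.2, dotProduct_mulVec, dotProduct_mulVec]
      congr 1
      have : star (Qᴴ *ᵥ x) = star (Eᴴ *ᵥ y) := by rw [hxy]
      rw [star_mulVec, star_mulVec, conjTranspose_conjTranspose,
        conjTranspose_conjTranspose] at this
      rw [this]
  -- rank of the stacked matrix
  have hrange : LinearMap.range f = ⊤ := by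
    set B : Matrix (Fin n ⊕ Fin n) (Fin n) ℂ := Matrix.fromRows E Q with hB
    have hBker : LinearMap.ker B.mulVecLin = ⊥ := by
      ext x
      simp only [LinearMap.mem_ker, Submodule.mem_bot, Matrix.mulVecLin_apply]
      constructor
      · intro h
        rw [hB, Matrix.fromRows_mulVec] at h
        apply hker x
        · funext i; exact congrFun h (Sum.inl i)
        · funext i; exact congrFun h (Sum.inr i)
      · rintro rfl; simp
    have hBrank : B.rank = n := by
      have h1 := LinearMap.finrank_range_add_finrank_ker B.mulVecLin
      rw [hBker, finrank_bot, add_zero, Module.finrank_pi, Fintype.card_fin] at h1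
      exact h1
    have hBHrank : (Bᴴ).rank = n := by rw [Matrix.rank_conjTranspose]; exact hBrank
    have hBH : Bᴴ = Matrix.fromCols Eᴴ Qᴴ :=
      Matrix.conjTranspose_fromRows_eq_fromCols_conjTranspose E Q
    have hreq : LinearMap.range (Bᴴ).mulVecLin = LinearMap.range f := by
      ext u
      simp only [LinearMap.mem_range, Matrix.mulVecLin_apply, hf, LinearMap.coprod_apply,
        LinearMap.neg_apply]
      constructor
      · rintro ⟨v, rfl⟩
        refine ⟨(v ∘ Sum.inr, -(v ∘ Sum.inl)), ?_⟩
        have hv : v = Sum.elim (v ∘ Sum.inl) (v ∘ Sum.inr) := by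
          funext i; cases i <;> rfl
        rw [hBH, hv, Matrix.fromCols_mulVec_sumElim]
        simp [Matrix.mulVec_neg]
        abel
      · rintro ⟨⟨x, y⟩, rfl⟩
        refine ⟨Sum.elim (-y) x, ?_⟩
        rw [hBH, Matrix.fromCols_mulVec_sumElim]
        simp [Matrix.mulVec_neg]
        abel
    apply Submodule.eq_top_of_finrank_eq
    rw [← hreq, Module.finrank_pi, Fintype.card_fin]
    exact hBHrank
  have hkerfin : Module.finrank ℂ (LinearMap.ker f) = n := by
    have h1 := LinearMap.finrank_range_add_finrank_ker f
    rw [hrange, finrank_top, Module.finrank_pi, Fintype.card_fin, Module.finrank_prod,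
      Module.finrank_pi, Fintype.card_fin] at h1
    omega
  exact Submodule.eq_of_le_of_finrank_eq hle (by rw [hfinL, hadj, hkerfin])
end

section
/- Let E, Q ∈ K^{n×n} with Q*E = E*Q. Then the pencil sE − Q is regular if and only if dim ran[E; Q] = n, i.e., if and only if ker E ∩ ker Q = {0}. -/
open Matrix
open scoped ComplexOrder

open Matrix Polynomial in
open scoped ComplexOrder in
private lemma stmt15_aux {n : ℕ} (E Q : Matrix (Fin n) (Fin n) ℂ)
    (hsym : Qᴴ * E = Eᴴ * Q)
    (hker : LinearMap.ker E.mulVecLin ⊓ LinearMap.ker Q.mulVecLin = ⊥)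
    (hdet : ((Polynomial.X : Polynomial ℂ) • E.map Polynomial.C - Q.map Polynomial.C).det = 0) :
    False := by
  classical
  obtain ⟨v, hv, hv0⟩ := (Matrix.exists_mulVec_eq_zero_iff).2 hdet
  set vc : ℕ → Fin n → ℂ := fun k i => (v i).coeff k with hvc
  have hQmap : ∀ k, (fun i => ((Q.map Polynomial.C *ᵥ v) i).coeff k) = Q *ᵥ vc k := by
    intro k; funext i
    simp only [Matrix.mulVec, dotProduct, Matrix.map_apply, Polynomial.finset_sum_coeff,
      Polynomial.coeff_C_mul, hvc]
  have hEmap : ∀ k, (fun i => ((E.map Polynomial.C *ᵥ v) i).coeff k) = E *ᵥ vc k := by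
    intro k; funext i
    simp only [Matrix.mulVec, dotProduct, Matrix.map_apply, Polynomial.finset_sum_coeff,
      Polynomial.coeff_C_mul, hvc]
  have h0 : Q *ᵥ (vc 0) = 0 := by
    funext i
    have := congr_arg (fun p => Polynomial.coeff p 0) (congr_fun hv0 i)
    simp only [Matrix.sub_mulVec, Matrix.smul_mulVec, Pi.sub_apply, Pi.smul_apply,
      smul_eq_mul, Polynomial.coeff_sub, Polynomial.mul_coeff_zero, Polynomial.coeff_X_zero,
      zero_mul, Polynomial.coeff_zero, Pi.zero_apply, zero_sub, neg_eq_zero] at this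
    rw [Pi.zero_apply, ← hQmap 0]
    exact this
  have hk : ∀ k, E *ᵥ (vc k) = Q *ᵥ (vc (k+1)) := by
    intro k; funext i
    have := congr_arg (fun p => Polynomial.coeff p (k+1)) (congr_fun hv0 i)
    simp only [Matrix.sub_mulVec, Matrix.smul_mulVec, Pi.sub_apply, Pi.smul_apply,
      smul_eq_mul, Polynomial.coeff_sub, Polynomial.coeff_X_mul, Polynomial.coeff_zero,
      Pi.zero_apply, sub_eq_zero] at this
    have h1 := congr_fun (hEmap k) i
    have h2 := congr_fun (hQmap (k+1)) i
    rw [← h1, ← h2]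
    exact this
  have key : ∀ x y : Fin n → ℂ, star (E *ᵥ x) ⬝ᵥ (Q *ᵥ y) = star (Q *ᵥ x) ⬝ᵥ (E *ᵥ y) := by
    intro x y
    rw [Matrix.star_mulVec, Matrix.star_mulVec, ← Matrix.dotProduct_mulVec,
      ← Matrix.dotProduct_mulVec, Matrix.mulVec_mulVec, Matrix.mulVec_mulVec, hsym]
  set G : ℕ → ℕ → ℂ := fun i j => star (E *ᵥ vc i) ⬝ᵥ (E *ᵥ vc j) with hG
  have hshift : ∀ i j, G (i+1) j = G i (j+1) := by
    intro i j
    calc G (i+1) j = star (E *ᵥ vc (i+1)) ⬝ᵥ (Q *ᵥ vc (j+1)) := by rw [hG]; dsimp; rw [hk j]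
    _ = star (Q *ᵥ vc (i+1)) ⬝ᵥ (E *ᵥ vc (j+1)) := key _ _
    _ = G i (j+1) := by rw [hG]; dsimp; rw [hk i]
  have hbase : ∀ k, G k 0 = 0 := by
    intro k
    calc G k 0 = star (Q *ᵥ vc (k+1)) ⬝ᵥ (E *ᵥ vc 0) := by rw [hG]; dsimp; rw [hk k]
    _ = star (E *ᵥ vc (k+1)) ⬝ᵥ (Q *ᵥ vc 0) := (key _ _).symm
    _ = 0 := by rw [h0, dotProduct_zero]
  have hGzero : ∀ j i, G i j = 0 := by
    intro j
    induction j with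
    | zero => exact hbase
    | succ j ih => intro i; rw [← hshift i j]; exact ih (i+1)
  have hE0 : ∀ k, E *ᵥ vc k = 0 := by
    intro k
    exact dotProduct_star_self_eq_zero.mp (hGzero k k)
  have hQ0 : ∀ k, Q *ᵥ vc k = 0 := by
    intro k
    cases k with
    | zero => exact h0
    | succ k => rw [← hk k]; exact hE0 k
  have hvz : ∀ k, vc k = 0 := by
    intro k
    have : vc k ∈ LinearMap.ker E.mulVecLin ⊓ LinearMap.ker Q.mulVecLin :=
      ⟨by simpa [Matrix.mulVecLin] using hE0 k, by simpa [Matrix.mulVecLin] using hQ0 k⟩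
    rw [hker] at this
    exact this
  apply hv
  funext i
  apply Polynomial.ext
  intro k
  have := congr_fun (hvz k) i
  simpa [hvc] using this

open PHDAE Matrix in
/-- for `Q*E = E*Q`, the pencil `sE − Q` is regular iff
`dim ran [E; Q] = n`, iff `ker E ∩ ker Q = {0}`. -/
theorem stmt_15 {n : ℕ} (E Q : Matrix (Fin n) (Fin n) ℂ) (hsym : Qᴴ * E = Eᴴ * Q) :
    (PencilRegular E Q ↔ Module.finrank ℂ (ranRel E Q) = n) ∧
    (PencilRegular E Q ↔ LinearMap.ker E.mulVecLin ⊓ LinearMap.ker Q.mulVecLin = ⊥) := by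
  classical
  have hiff : PencilRegular E Q ↔
      LinearMap.ker E.mulVecLin ⊓ LinearMap.ker Q.mulVecLin = ⊥ := by
    constructor
    · intro hreg
      rw [Submodule.eq_bot_iff]
      intro x hx
      by_contra hx0
      apply hreg
      apply (Matrix.exists_mulVec_eq_zero_iff).1
      refine ⟨fun i => Polynomial.C (x i), ?_, ?_⟩
      · intro h
        apply hx0
        funext i
        have := congr_fun h i
        simpa using this
      · have hE : E *ᵥ x = 0 := hx.1
        have hQ : Q *ᵥ x = 0 := hx.2
        funext i
        simp only [Matrix.sub_mulVec, Matrix.smul_mulVec, Pi.sub_apply, Pi.smul_apply,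
          smul_eq_mul, Pi.zero_apply]
        have hE' : ((E.map Polynomial.C) *ᵥ fun i => Polynomial.C (x i)) i
            = Polynomial.C ((E *ᵥ x) i) := by
          simp [Matrix.mulVec, dotProduct, map_sum]
        have hQ' : ((Q.map Polynomial.C) *ᵥ fun i => Polynomial.C (x i)) i
            = Polynomial.C ((Q *ᵥ x) i) := by
          simp [Matrix.mulVec, dotProduct, map_sum]
        rw [hE', hQ', hE, hQ]
        simp
    · intro hker hdet
      exact stmt15_aux E Q hsym hker hdet
  have hker_eq : LinearMap.ker ((Matrix.mulVecLin E).prod (Matrix.mulVecLin Q)) =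
      LinearMap.ker E.mulVecLin ⊓ LinearMap.ker Q.mulVecLin := LinearMap.ker_prod _ _
  have hrn : Module.finrank ℂ (ranRel E Q) +
      Module.finrank ℂ (LinearMap.ker ((Matrix.mulVecLin E).prod (Matrix.mulVecLin Q))) = n := by
    have := LinearMap.finrank_range_add_finrank_ker ((Matrix.mulVecLin E).prod (Matrix.mulVecLin Q))
    rwa [Module.finrank_fin_fun] at this
  have hfr : Module.finrank ℂ (ranRel E Q) = n ↔
      LinearMap.ker E.mulVecLin ⊓ LinearMap.ker Q.mulVecLin = ⊥ := by
    rw [← hker_eq]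
    constructor
    · intro h
      rw [h] at hrn
      have h0 : Module.finrank ℂ
          (LinearMap.ker ((Matrix.mulVecLin E).prod (Matrix.mulVecLin Q))) = 0 := by omega
      exact Submodule.finrank_eq_zero.mp h0
    · intro h
      rw [h] at hrn
      simpa using hrn
  exact ⟨hiff.trans hfr.symm, hiff⟩
end

section
/- Let sE − A ∈ K[s]^{n×n} be regular. Then the index of sE − A equals the smallest integer k for which there exist M > 0 and ω ∈ ℝ such that ‖(λE − A)^{−1}‖ ≤ M|λ|^{k−1} for all real λ > ω. -/
open Matrix
open scoped ComplexOrder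

section AuxLemmas
open Matrix PHDAE Finset

attribute [local instance] Matrix.frobeniusSeminormedAddCommGroup
  Matrix.frobeniusNormedAddCommGroup Matrix.frobeniusNormedSpace
  Matrix.frobeniusNormedRing

variable {m : ℕ}

lemma mnorm_eq_norm (M : Matrix (Fin m) (Fin m) ℂ) : mnorm M = ‖M‖ := by
  rw [PHDAE.mnorm, Matrix.frobenius_norm_def, Real.sqrt_eq_rpow]
  congr 1
  refine Finset.sum_congr rfl fun i _ => Finset.sum_congr rfl fun j _ => ?_
  rw [Real.rpow_two]

lemma mnorm_nonneg (M : Matrix (Fin m) (Fin m) ℂ) : 0 ≤ mnorm M := by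
  rw [mnorm_eq_norm]; exact norm_nonneg _

lemma mnorm_mul_le (A B : Matrix (Fin m) (Fin m) ℂ) :
    mnorm (A * B) ≤ mnorm A * mnorm B := by
  simp only [mnorm_eq_norm]; exact norm_mul_le _ _

lemma mnorm_add_le (A B : Matrix (Fin m) (Fin m) ℂ) :
    mnorm (A + B) ≤ mnorm A + mnorm B := by
  simp only [mnorm_eq_norm]; exact norm_add_le _ _

lemma mnorm_smul (c : ℂ) (M : Matrix (Fin m) (Fin m) ℂ) :
    mnorm (c • M) = ‖c‖ * mnorm M := by
  simp only [mnorm_eq_norm]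
  rw [norm_smul]

lemma mnorm_neg (M : Matrix (Fin m) (Fin m) ℂ) : mnorm (-M) = mnorm M := by
  simp only [mnorm_eq_norm, norm_neg]

lemma mnorm_sum_le {ι : Type*} (s : Finset ι) (f : ι → Matrix (Fin m) (Fin m) ℂ) :
    mnorm (∑ i ∈ s, f i) ≤ ∑ i ∈ s, mnorm (f i) := by
  simp only [mnorm_eq_norm]; exact norm_sum_le _ _

lemma abs_entry_le_mnorm (M : Matrix (Fin m) (Fin m) ℂ) (i j : Fin m) :
    ‖M i j‖ ≤ mnorm M := by
  rw [PHDAE.mnorm]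
  have h1 : ‖M i j‖ ^ 2 ≤ ∑ i', ∑ j', ‖M i' j'‖ ^ 2 := by
    have h2 : ‖M i j‖ ^ 2 ≤ ∑ j', ‖M i j'‖ ^ 2 :=
      Finset.single_le_sum (f := fun j' => ‖M i j'‖ ^ 2)
        (fun _ _ => by positivity) (Finset.mem_univ j)
    exact h2.trans (Finset.single_le_sum (f := fun i' => ∑ j', ‖M i' j'‖ ^ 2)
      (fun _ _ => by positivity) (Finset.mem_univ i))
  calc ‖M i j‖ = Real.sqrt (‖M i j‖ ^ 2) := by
        rw [Real.sqrt_sq (by positivity)]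
    _ ≤ _ := Real.sqrt_le_sqrt h1

lemma mnorm_le_of_entries (M : Matrix (Fin m) (Fin m) ℂ) (c : ℝ) (h0 : 0 ≤ c)
    (h : ∀ i j, ‖M i j‖ ≤ c) : mnorm M ≤ m * c := by
  rw [PHDAE.mnorm]
  have h1 : (∑ i, ∑ j, ‖M i j‖ ^ 2) ≤ (m * c) ^ 2 := by
    calc (∑ i, ∑ j, ‖M i j‖ ^ 2)
        ≤ ∑ _i : Fin m, ∑ _j : Fin m, c ^ 2 := by
          refine Finset.sum_le_sum fun i _ => Finset.sum_le_sum fun j _ => ?_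
          exact pow_le_pow_left₀ (norm_nonneg _) (h i j) 2
      _ = (m * c) ^ 2 := by
          simp [Finset.sum_const, Finset.card_univ]
          ring
  calc Real.sqrt (∑ i, ∑ j, ‖M i j‖ ^ 2) ≤ Real.sqrt ((m * c) ^ 2) :=
        Real.sqrt_le_sqrt h1
    _ = m * c := Real.sqrt_sq (by positivity)

lemma abs_det_le (M : Matrix (Fin m) (Fin m) ℂ) (c : ℝ)
    (h : ∀ i j, ‖M i j‖ ≤ c) (h0 : 0 ≤ c) :
    ‖M.det‖ ≤ m.factorial * c ^ m := by
  rw [Matrix.det_apply]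
  calc ‖∑ σ : Equiv.Perm (Fin m), Equiv.Perm.sign σ • ∏ i, M (σ i) i‖
      ≤ ∑ σ : Equiv.Perm (Fin m), ‖Equiv.Perm.sign σ • ∏ i, M (σ i) i‖ := by
        exact
          norm_sum_le Finset.univ (fun σ : Equiv.Perm (Fin m) =>
            Equiv.Perm.sign σ • ∏ i, M (σ i) i)
    _ ≤ ∑ _σ : Equiv.Perm (Fin m), c ^ m := by
        refine Finset.sum_le_sum fun σ _ => ?_
        have hs : ‖Equiv.Perm.sign σ • ∏ i, M (σ i) i‖
            = ‖∏ i, M (σ i) i‖ := by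
          rcases Int.units_eq_one_or (Equiv.Perm.sign σ) with h1 | h1 <;>
            simp [h1]
        rw [hs, norm_prod]
        calc (∏ i, ‖M (σ i) i‖) ≤ ∏ _i : Fin m, c :=
              Finset.prod_le_prod (fun _ _ => norm_nonneg _) (fun i _ => h _ _)
          _ = c ^ m := by simp
    _ = m.factorial * c ^ m := by
        simp [Finset.sum_const, Finset.card_univ, Fintype.card_perm]

lemma abs_adjugate_le (M : Matrix (Fin m) (Fin m) ℂ) (c : ℝ) (hc : 1 ≤ c)
    (h : ∀ i j, ‖M i j‖ ≤ c) (i j : Fin m) :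
    ‖M.adjugate i j‖ ≤ m.factorial * c ^ m := by
  rw [Matrix.adjugate_apply]
  refine abs_det_le _ c (fun a b => ?_) (by linarith)
  by_cases hab : a = j
  · subst hab
    rw [Matrix.updateRow_self]
    by_cases hbi : b = i
    · subst hbi; simp [Pi.single_eq_same]; linarith
    · simp [Pi.single_eq_of_ne hbi]; linarith
  · rw [Matrix.updateRow_ne hab]; exact h a b

lemma sqrt_add_le' (a b : ℝ) (ha : 0 ≤ a) (hb : 0 ≤ b) :
    Real.sqrt (a + b) ≤ Real.sqrt a + Real.sqrt b := by
  have h1 : a + b ≤ (Real.sqrt a + Real.sqrt b) ^ 2 := by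
    have h2 : (Real.sqrt a + Real.sqrt b) ^ 2
        = a + b + 2 * (Real.sqrt a * Real.sqrt b) := by
      rw [add_sq, Real.sq_sqrt ha, Real.sq_sqrt hb]; ring
    nlinarith [Real.sqrt_nonneg a, Real.sqrt_nonneg b]
  calc Real.sqrt (a + b) ≤ Real.sqrt ((Real.sqrt a + Real.sqrt b) ^ 2) :=
        Real.sqrt_le_sqrt h1
    _ = _ := Real.sqrt_sq (by positivity)

lemma mnorm_reindex_blocks {p q n : ℕ} (e : Fin p ⊕ Fin q ≃ Fin n)
    (A : Matrix (Fin p) (Fin p) ℂ) (D : Matrix (Fin q) (Fin q) ℂ) :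
    mnorm ((Matrix.reindex e e) (Matrix.fromBlocks A 0 0 D)) ≤ mnorm A + mnorm D := by
  rw [PHDAE.mnorm]
  set X := Matrix.fromBlocks A 0 0 D with hX
  have hsum : (∑ i : Fin n, ∑ j : Fin n,
      ‖(Matrix.reindex e e X) i j‖ ^ 2)
      = ∑ i : Fin p ⊕ Fin q, ∑ j : Fin p ⊕ Fin q, ‖X i j‖ ^ 2 := by
    rw [← Equiv.sum_comp e (fun i => ∑ j : Fin n,
      ‖(Matrix.reindex e e X) i j‖ ^ 2)]
    refine Finset.sum_congr rfl fun i _ => ?_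
    rw [← Equiv.sum_comp e (fun j =>
      ‖(Matrix.reindex e e X) (e i) j‖ ^ 2)]
    refine Finset.sum_congr rfl fun j _ => ?_
    simp [Matrix.reindex_apply, Matrix.submatrix_apply]
  rw [hsum]
  have hsplit : (∑ i : Fin p ⊕ Fin q, ∑ j : Fin p ⊕ Fin q, ‖X i j‖ ^ 2)
      = (∑ i : Fin p, ∑ j : Fin p, ‖A i j‖ ^ 2)
        + (∑ i : Fin q, ∑ j : Fin q, ‖D i j‖ ^ 2) := by
    rw [Fintype.sum_sum_type]
    simp only [Fintype.sum_sum_type]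
    simp [hX, Matrix.fromBlocks_apply₁₁, Matrix.fromBlocks_apply₁₂,
      Matrix.fromBlocks_apply₂₁, Matrix.fromBlocks_apply₂₂]
  rw [hsplit]
  exact sqrt_add_le' _ _ (by positivity) (by positivity)

lemma monic_eval_lower (P : Polynomial ℂ) (hP : P.Monic) (d : ℕ) (hd : P.natDegree = d) :
    ∃ c : ℝ, 0 ≤ c ∧ ∀ x : ℝ, 1 ≤ x → c < x →
      x ^ d / 2 ≤ ‖P.eval (x : ℂ)‖ := by
  have hcoeffsum : 0 ≤ ∑ i ∈ Finset.range d, ‖P.coeff i‖ :=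
    Finset.sum_nonneg fun i _ => norm_nonneg _
  refine ⟨2 * ∑ i ∈ Finset.range d, ‖P.coeff i‖, by linarith, fun x hx hcx => ?_⟩
  have heval : P.eval (x : ℂ) = (x : ℂ) ^ d + ∑ i ∈ Finset.range d, P.coeff i * (x : ℂ) ^ i := by
    rw [Polynomial.eval_eq_sum_range, hd, Finset.sum_range_succ]
    have : P.coeff d = 1 := by
      have := hP.coeff_natDegree; rwa [hd] at this
    rw [this, one_mul, add_comm]
  rw [heval]
  have habs : ‖(x : ℂ) ^ d‖ - ‖∑ i ∈ Finset.range d,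
      P.coeff i * (x : ℂ) ^ i‖ ≤ ‖(x : ℂ) ^ d + ∑ i ∈ Finset.range d,
      P.coeff i * (x : ℂ) ^ i‖ := by
    have := norm_add_le ((x : ℂ) ^ d + ∑ i ∈ Finset.range d, P.coeff i * (x : ℂ) ^ i)
      (-(∑ i ∈ Finset.range d, P.coeff i * (x : ℂ) ^ i))
    simp only [add_neg_cancel_right, norm_neg] at this
    linarith
  have hxd : ‖(x : ℂ) ^ d‖ = x ^ d := by
    rw [norm_pow, Complex.norm_real, Real.norm_eq_abs, abs_of_pos (by linarith)]
  have hsumb : ‖∑ i ∈ Finset.range d, P.coeff i * (x : ℂ) ^ i‖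
      ≤ (∑ i ∈ Finset.range d, ‖P.coeff i‖) * x ^ d / x := by
    calc ‖∑ i ∈ Finset.range d, P.coeff i * (x : ℂ) ^ i‖
        ≤ ∑ i ∈ Finset.range d, ‖P.coeff i * (x : ℂ) ^ i‖ := by
          exact
            norm_sum_le (Finset.range d) (fun i => P.coeff i * (x : ℂ) ^ i)
      _ ≤ ∑ i ∈ Finset.range d, ‖P.coeff i‖ * (x ^ d / x) := by
          refine Finset.sum_le_sum fun i hi => ?_
          rw [norm_mul, norm_pow, Complex.norm_real, Real.norm_eq_abs, abs_of_pos (by linarith)]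
          refine mul_le_mul_of_nonneg_left ?_ (norm_nonneg _)
          rw [le_div_iff₀ (by linarith), ← pow_succ]
          exact pow_le_pow_right₀ hx (Finset.mem_range.mp hi)
      _ = (∑ i ∈ Finset.range d, ‖P.coeff i‖) * x ^ d / x := by
          rw [← Finset.sum_mul, mul_div_assoc]
  set s := ∑ i ∈ Finset.range d, ‖P.coeff i‖ with hs
  have hs0 : 0 ≤ s := hcoeffsum
  have hxpos : (0:ℝ) < x := by linarith
  have hxdpos : (0:ℝ) < x ^ d := by positivity
  have key : s * x ^ d / x ≤ x ^ d / 2 := by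
    rw [div_le_div_iff₀ hxpos (by norm_num)]
    have : 2 * s ≤ x := by linarith
    nlinarith
  calc x ^ d / 2 = x ^ d - x ^ d / 2 := by ring
    _ ≤ x ^ d - s * x ^ d / x := by linarith
    _ ≤ _ := by linarith [habs, hsumb]

end AuxLemmas

section AuxLemmas2
open Matrix PHDAE Finset

lemma det_smul_one_sub {m : ℕ} (J : Matrix (Fin m) (Fin m) ℂ) (μ : ℂ) :
    (μ • (1 : Matrix (Fin m) (Fin m) ℂ) - J).det = J.charpoly.eval μ := by
  rw [Matrix.charpoly, ← Polynomial.coe_evalRingHom, RingHom.map_det]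
  congr 1
  ext i j
  by_cases h : i = j
  · subst h
    simp [Matrix.charmatrix_apply_eq, Matrix.sub_apply, Matrix.smul_apply,
      Matrix.one_apply_eq, smul_eq_mul]
  · simp [Matrix.charmatrix_apply_ne _ _ _ h, Matrix.sub_apply, Matrix.smul_apply,
      Matrix.one_apply_ne h, smul_eq_mul]

lemma nilpotent_right_inv {m : ℕ} (N : Matrix (Fin m) (Fin m) ℂ) (ν : ℕ)
    (hN : N ^ ν = 0) (μ : ℂ) :
    (μ • N - 1) * (-(∑ i ∈ Finset.range ν, μ ^ i • N ^ i)) = 1 := by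
  have h1 : ∀ i, μ ^ i • N ^ i = (μ • N) ^ i := fun i => (smul_pow μ N i).symm
  simp_rw [h1]
  rw [mul_neg, mul_geom_sum]
  have h2 : (μ • N) ^ ν = 0 := by rw [smul_pow, hN, smul_zero]
  rw [h2]
  simp

end AuxLemmas2

open PHDAE Matrix in
lemma pencil_resolvent {n p q : ℕ} (hpq : p + q = n)
    (E A S T : Matrix (Fin n) (Fin n) ℂ)
    (J : Matrix (Fin p) (Fin p) ℂ) (N : Matrix (Fin q) (Fin q) ℂ)
    (hS : IsUnit S.det) (hT : IsUnit T.det)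
    (hE : S * E * T = Matrix.reindex (finSumFinEquiv.trans (finCongr hpq))
      (finSumFinEquiv.trans (finCongr hpq)) (Matrix.fromBlocks 1 0 0 N))
    (hA : S * A * T = Matrix.reindex (finSumFinEquiv.trans (finCongr hpq))
      (finSumFinEquiv.trans (finCongr hpq)) (Matrix.fromBlocks J 0 0 1))
    (ν : ℕ) (hNν : N ^ ν = 0) :
    ∃ c₀ K₂ : ℝ, 0 ≤ K₂ ∧ ∀ lam : ℝ, 1 < lam → c₀ < lam →
      mnorm (((lam : ℂ) • (1 : Matrix (Fin p) (Fin p) ℂ) - J)⁻¹) ≤ K₂ / lam ∧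
      (((lam : ℂ) • E - A))⁻¹ =
        T * Matrix.reindex (finSumFinEquiv.trans (finCongr hpq))
          (finSumFinEquiv.trans (finCongr hpq)) (Matrix.fromBlocks
          (((lam : ℂ) • (1 : Matrix (Fin p) (Fin p) ℂ) - J)⁻¹) 0 0
          (-(∑ i ∈ Finset.range ν, (lam : ℂ) ^ i • N ^ i))) * S := by
  classical
  set e : Fin p ⊕ Fin q ≃ Fin n := finSumFinEquiv.trans (finCongr hpq) with he
  -- Step A: Weierstrass form of the pencil
  have keyA : ∀ μ : ℂ, S * (μ • E - A) * T =
      Matrix.reindex e e (Matrix.fromBlocks (μ • 1 - J) 0 0 (μ • N - 1)) := by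
    intro μ
    have h0 : S * (μ • E - A) * T = μ • (S * E * T) - S * A * T := by
      rw [Matrix.mul_sub, Matrix.sub_mul, Matrix.mul_smul, Matrix.smul_mul]
    rw [h0, hE, hA]
    ext i j
    rcases hi : e.symm i with a | a <;> rcases hj : e.symm j with b | b <;>
      simp [Matrix.reindex_apply, Matrix.submatrix_apply, hi, hj, Matrix.sub_apply,
        Matrix.smul_apply, smul_eq_mul]
  have hmon : J.charpoly.Monic := J.charpoly_monic
  have hdeg : J.charpoly.natDegree = p := by
    simpa using J.charpoly_natDegree_eq_dim
  obtain ⟨c₀, hc₀0, hc₀⟩ := monic_eval_lower J.charpoly hmon p hdeg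
  set cJ : ℝ := 1 + mnorm J with hcJ
  have hmJ0 : 0 ≤ mnorm J := mnorm_nonneg J
  have hcJ1 : 1 ≤ cJ := by simp [hcJ]; linarith
  set K₀ : ℝ := 2 * p.factorial * cJ ^ p with hK₀
  have hK₀0 : 0 ≤ K₀ := by
    have : (0:ℝ) ≤ cJ ^ p := by positivity
    have : (0:ℝ) < (p.factorial : ℝ) := by exact_mod_cast p.factorial_pos
    positivity
  set K₁ : ℝ := p * K₀ with hK₁
  have hK₁0 : 0 ≤ K₁ := by positivity
  set K₂ : ℝ := mnorm (1 : Matrix (Fin p) (Fin p) ℂ) + mnorm J * K₁ with hK₂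
  have hK₂0 : 0 ≤ K₂ := by
    have := mnorm_nonneg (1 : Matrix (Fin p) (Fin p) ℂ)
    nlinarith
  -- resolvent bound for the J-block
  have hGH : ∀ lam : ℝ, 1 < lam → c₀ < lam →
      ((lam : ℂ) • (1 : Matrix (Fin p) (Fin p) ℂ) - J) *
        ((lam : ℂ) • (1 : Matrix (Fin p) (Fin p) ℂ) - J)⁻¹ = 1 ∧
      mnorm (((lam : ℂ) • (1 : Matrix (Fin p) (Fin p) ℂ) - J)⁻¹) ≤ K₂ / lam := by
    intro lam h1 h2
    have hx1 : (1:ℝ) ≤ lam := h1.le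
    have hxpos : (0:ℝ) < lam := by linarith
    set μ : ℂ := (lam : ℂ) with hμ
    set B : Matrix (Fin p) (Fin p) ℂ := μ • 1 - J with hB
    have hdlow : lam ^ p / 2 ≤ ‖B.det‖ := by
      rw [hB, det_smul_one_sub]
      exact hc₀ lam hx1 h2
    have hdetpos : 0 < ‖B.det‖ := lt_of_lt_of_le (by positivity) hdlow
    have hdetne : B.det ≠ 0 := fun h => by simp [h] at hdetpos
    have hunit : IsUnit B.det := isUnit_iff_ne_zero.mpr hdetne
    have hmul : B * B⁻¹ = 1 := Matrix.mul_nonsing_inv _ hunit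
    have hentry : ∀ i j, ‖B i j‖ ≤ cJ * lam := by
      intro i j
      have hBij : B i j = μ * (1 : Matrix (Fin p) (Fin p) ℂ) i j - J i j := by
        simp [hB, Matrix.sub_apply, Matrix.smul_apply, smul_eq_mul]
      rw [hBij]
      have htri : ‖μ * (1 : Matrix (Fin p) (Fin p) ℂ) i j - J i j‖
          ≤ ‖μ * (1 : Matrix (Fin p) (Fin p) ℂ) i j‖ + ‖J i j‖ := by
        simpa [sub_eq_add_neg] using
          norm_add_le (μ * (1 : Matrix (Fin p) (Fin p) ℂ) i j) (-(J i j))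
      have h1e : ‖μ * (1 : Matrix (Fin p) (Fin p) ℂ) i j‖ ≤ lam := by
        by_cases hij : i = j
        · subst hij
          simp [hμ, Matrix.one_apply_eq, Complex.norm_real, Real.norm_eq_abs, abs_of_pos hxpos]
        · simp [Matrix.one_apply_ne hij]
          linarith
      have h2e : ‖J i j‖ ≤ mnorm J := abs_entry_le_mnorm J i j
      have : lam + mnorm J ≤ cJ * lam := by
        rw [hcJ]; nlinarith
      linarith
    have hadj : ∀ i j, ‖B.adjugate i j‖ ≤ p.factorial * (cJ * lam) ^ p :=
      abs_adjugate_le B (cJ * lam) (by nlinarith) hentry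
    have hinventry : ∀ i j, ‖B⁻¹ i j‖ ≤ K₀ := by
      intro i j
      have hBinv : B⁻¹ i j = B.det⁻¹ * B.adjugate i j := by
        rw [Matrix.inv_def, Ring.inverse_eq_inv']
        simp [Matrix.smul_apply, smul_eq_mul]
      rw [hBinv, norm_mul, norm_inv]
      have hinv2 : (‖B.det‖)⁻¹ ≤ 2 / lam ^ p := by
        rw [div_eq_mul_inv]
        have hlp : (0:ℝ) < lam ^ p := by positivity
        have := one_div_le_one_div_of_le (by positivity : (0:ℝ) < lam ^ p / 2) hdlow
        calc (‖B.det‖)⁻¹ = 1 / ‖B.det‖ := (one_div _).symm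
          _ ≤ 1 / (lam ^ p / 2) := this
          _ = 2 * (lam ^ p)⁻¹ := by field_simp
      calc (‖B.det‖)⁻¹ * ‖B.adjugate i j‖
          ≤ (2 / lam ^ p) * (p.factorial * (cJ * lam) ^ p) := by
            refine mul_le_mul hinv2 (hadj i j) (norm_nonneg _) (by positivity)
        _ = K₀ := by
            rw [hK₀, mul_pow]
            have hlp : (lam:ℝ) ^ p ≠ 0 := by positivity
            field_simp
    have hmn : mnorm B⁻¹ ≤ K₁ := by
      rw [hK₁]
      exact mnorm_le_of_entries _ K₀ hK₀0 hinventry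
    refine ⟨hmul, ?_⟩
    have hboot : μ • B⁻¹ = 1 + J * B⁻¹ := by
      have hexp : B * B⁻¹ = μ • B⁻¹ - J * B⁻¹ := by
        rw [hB, Matrix.sub_mul, Matrix.smul_mul, Matrix.one_mul]
      rw [hexp] at hmul
      rw [sub_eq_iff_eq_add] at hmul
      rw [hmul]
    have hsm : mnorm (μ • B⁻¹) = lam * mnorm B⁻¹ := by
      rw [mnorm_smul, hμ, Complex.norm_real, Real.norm_eq_abs, abs_of_pos hxpos]
    have hfin : lam * mnorm B⁻¹ ≤ K₂ := by
      rw [← hsm, hboot]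
      calc mnorm (1 + J * B⁻¹) ≤ mnorm (1 : Matrix (Fin p) (Fin p) ℂ) + mnorm (J * B⁻¹) :=
            mnorm_add_le _ _
        _ ≤ mnorm (1 : Matrix (Fin p) (Fin p) ℂ) + mnorm J * mnorm B⁻¹ := by
            linarith [mnorm_mul_le J B⁻¹]
        _ ≤ K₂ := by
            rw [hK₂]
            have := mul_le_mul_of_nonneg_left hmn hmJ0
            linarith
    rw [le_div_iff₀ hxpos, mul_comm]
    exact hfin
  -- resolvent formula
  have hres : ∀ lam : ℝ, 1 < lam → c₀ < lam →
      (((lam : ℂ) • E - A))⁻¹ =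
        T * Matrix.reindex e e (Matrix.fromBlocks
          (((lam : ℂ) • (1 : Matrix (Fin p) (Fin p) ℂ) - J)⁻¹) 0 0
          (-(∑ i ∈ Finset.range ν, (lam : ℂ) ^ i • N ^ i))) * S := by
    intro lam h1 h2
    obtain ⟨hmul, _⟩ := hGH lam h1 h2
    set G : Matrix (Fin p) (Fin p) ℂ :=
      ((lam : ℂ) • (1 : Matrix (Fin p) (Fin p) ℂ) - J)⁻¹ with hG
    set H : Matrix (Fin q) (Fin q) ℂ :=
      -(∑ i ∈ Finset.range ν, (lam : ℂ) ^ i • N ^ i) with hH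
    set R : Matrix (Fin n) (Fin n) ℂ :=
      Matrix.reindex e e (Matrix.fromBlocks G 0 0 H) with hR
    have hDR : Matrix.reindex e e (Matrix.fromBlocks ((lam : ℂ) • 1 - J) 0 0
        ((lam : ℂ) • N - 1)) * R = 1 := by
      rw [hR, Matrix.reindex_apply, Matrix.reindex_apply, Matrix.submatrix_mul_equiv]
      have hblock : Matrix.fromBlocks ((lam : ℂ) • 1 - J) 0 0 ((lam : ℂ) • N - 1) *
          Matrix.fromBlocks G 0 0 H = 1 := by
        rw [Matrix.fromBlocks_multiply]
        simp only [Matrix.mul_zero, Matrix.zero_mul, add_zero, zero_add,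
          Matrix.zero_mul, Matrix.mul_zero]
        rw [hmul, hH, nilpotent_right_inv N ν hNν]
        exact Matrix.fromBlocks_one
      rw [hblock, Matrix.submatrix_one_equiv]
    apply Matrix.inv_eq_right_inv
    have hA2 := keyA ((lam : ℂ))
    have hS1 : S * (((lam : ℂ) • E - A) * (T * R * S)) = S := by
      calc S * (((lam : ℂ) • E - A) * (T * R * S))
          = S * ((lam : ℂ) • E - A) * T * R * S := by
            simp only [Matrix.mul_assoc]
        _ = S := by
            rw [hA2, hDR, Matrix.one_mul]
    have h7 := congrArg (fun Z => S⁻¹ * Z) hS1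
    rw [← Matrix.mul_assoc, Matrix.nonsing_inv_mul S hS, Matrix.one_mul] at h7
    exact h7
  exact ⟨c₀, K₂, hK₂0, fun lam h1 h2 => ⟨(hGH lam h1 h2).2, hres lam h1 h2⟩⟩


open PHDAE Matrix in
/-- for a regular pencil given in Weierstraß form
`S (sE − A) T = diag (sI − J, sN − I)` with `N` nilpotent of nilpotency index `ν`
(the Kronecker index of the pencil), `ν` is the least `k` such that
`‖(λE − A)⁻¹‖ ≤ M |λ|^(k−1)` for all sufficiently large real `λ`. -/
theorem stmt_17 {n p q : ℕ} (hpq : p + q = n)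
    (E A S T : Matrix (Fin n) (Fin n) ℂ)
    (J : Matrix (Fin p) (Fin p) ℂ) (N : Matrix (Fin q) (Fin q) ℂ)
    (hS : IsUnit S.det) (hT : IsUnit T.det)
    (hE : S * E * T = Matrix.reindex (finSumFinEquiv.trans (finCongr hpq))
      (finSumFinEquiv.trans (finCongr hpq)) (Matrix.fromBlocks 1 0 0 N))
    (hA : S * A * T = Matrix.reindex (finSumFinEquiv.trans (finCongr hpq))
      (finSumFinEquiv.trans (finCongr hpq)) (Matrix.fromBlocks J 0 0 1))
    (ν : ℕ) (hν : IsLeast {k : ℕ | N ^ k = 0} ν) :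
    IsLeast {k : ℕ | ∃ M > (0 : ℝ), ∃ ω : ℝ, ∀ lam : ℝ, ω < lam →
      mnorm (((lam : ℂ) • E - A)⁻¹) ≤ M * |lam| ^ ((k : ℝ) - 1)} ν := by
  classical
  set e : Fin p ⊕ Fin q ≃ Fin n := finSumFinEquiv.trans (finCongr hpq) with he
  obtain ⟨c₀, K₂, hK₂0, hmain⟩ := pencil_resolvent hpq E A S T J N hS hT hE hA ν hν.1
  have hGH : ∀ lam : ℝ, 1 < lam → c₀ < lam →
      mnorm (((lam : ℂ) • (1 : Matrix (Fin p) (Fin p) ℂ) - J)⁻¹) ≤ K₂ / lam :=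
    fun lam h1 h2 => (hmain lam h1 h2).1
  have hres : ∀ lam : ℝ, 1 < lam → c₀ < lam →
      (((lam : ℂ) • E - A))⁻¹ =
        T * Matrix.reindex e e (Matrix.fromBlocks
          (((lam : ℂ) • (1 : Matrix (Fin p) (Fin p) ℂ) - J)⁻¹) 0 0
          (-(∑ i ∈ Finset.range ν, (lam : ℂ) ^ i • N ^ i))) * S :=
    fun lam h1 h2 => (hmain lam h1 h2).2
  constructor
  · -- ν belongs to the set
    set K₃ : ℝ := ∑ i ∈ Finset.range ν, mnorm (N ^ i) with hK₃
    have hK₃0 : 0 ≤ K₃ := Finset.sum_nonneg fun i _ => mnorm_nonneg _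
    have hmT0 : 0 ≤ mnorm T := mnorm_nonneg T
    have hmS0 : 0 ≤ mnorm S := mnorm_nonneg S
    have hMpos : 0 < (mnorm T * mnorm S + 1) * (K₂ + K₃ + 1) := by
      have h8 := mul_nonneg hmT0 hmS0
      exact mul_pos (by linarith) (by linarith)
    refine ⟨(mnorm T * mnorm S + 1) * (K₂ + K₃ + 1), hMpos, max c₀ 1,
      fun lam hlam => ?_⟩
    have h1 : 1 < lam := lt_of_le_of_lt (le_max_right _ _) hlam
    have h2 : c₀ < lam := lt_of_le_of_lt (le_max_left _ _) hlam
    have hxpos : (0:ℝ) < lam := by linarith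
    have hGbound := hGH lam h1 h2
    rw [hres lam h1 h2, abs_of_pos hxpos]
    set G : Matrix (Fin p) (Fin p) ℂ :=
      ((lam : ℂ) • (1 : Matrix (Fin p) (Fin p) ℂ) - J)⁻¹ with hGd
    set H : Matrix (Fin q) (Fin q) ℂ :=
      -(∑ i ∈ Finset.range ν, (lam : ℂ) ^ i • N ^ i) with hHd
    have hX0 : (0:ℝ) ≤ lam ^ ((ν:ℝ) - 1) := Real.rpow_nonneg hxpos.le _
    have hG2 : mnorm G ≤ K₂ * lam ^ ((ν:ℝ) - 1) := by
      refine hGbound.trans ?_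
      rw [div_eq_mul_inv, ← Real.rpow_neg_one lam]
      refine mul_le_mul_of_nonneg_left ?_ hK₂0
      refine Real.rpow_le_rpow_of_exponent_le h1.le ?_
      have : (0:ℝ) ≤ (ν:ℝ) := Nat.cast_nonneg ν
      linarith
    have hH2 : mnorm H ≤ K₃ * lam ^ ((ν:ℝ) - 1) := by
      calc mnorm H = mnorm (∑ i ∈ Finset.range ν, (lam : ℂ) ^ i • N ^ i) := by
            rw [hHd, mnorm_neg]
        _ ≤ ∑ i ∈ Finset.range ν, mnorm ((lam : ℂ) ^ i • N ^ i) := mnorm_sum_le _ _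
        _ ≤ ∑ i ∈ Finset.range ν, mnorm (N ^ i) * lam ^ ((ν:ℝ) - 1) := by
            refine Finset.sum_le_sum fun i hi => ?_
            rw [mnorm_smul, norm_pow, Complex.norm_real, Real.norm_eq_abs, abs_of_pos hxpos, mul_comm]
            refine mul_le_mul_of_nonneg_left ?_ (mnorm_nonneg _)
            rw [← Real.rpow_natCast lam i]
            refine Real.rpow_le_rpow_of_exponent_le h1.le ?_
            have : (i:ℝ) + 1 ≤ (ν:ℝ) := by
              exact_mod_cast Nat.succ_le_of_lt (Finset.mem_range.mp hi)
            linarith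
        _ = K₃ * lam ^ ((ν:ℝ) - 1) := by rw [hK₃, ← Finset.sum_mul]
    have hchain : mnorm (T * Matrix.reindex e e (Matrix.fromBlocks G 0 0 H) * S)
        ≤ mnorm T * (mnorm G + mnorm H) * mnorm S := by
      calc mnorm (T * Matrix.reindex e e (Matrix.fromBlocks G 0 0 H) * S)
          ≤ mnorm (T * Matrix.reindex e e (Matrix.fromBlocks G 0 0 H)) * mnorm S :=
            mnorm_mul_le _ _
        _ ≤ mnorm T * mnorm (Matrix.reindex e e (Matrix.fromBlocks G 0 0 H)) * mnorm S :=
            mul_le_mul_of_nonneg_right (mnorm_mul_le _ _) hmS0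
        _ ≤ mnorm T * (mnorm G + mnorm H) * mnorm S := by
            refine mul_le_mul_of_nonneg_right
              (mul_le_mul_of_nonneg_left (mnorm_reindex_blocks e G H) hmT0) hmS0
    have hGH3 : mnorm G + mnorm H ≤ (K₂ + K₃) * lam ^ ((ν:ℝ) - 1) := by
      rw [add_mul]; linarith
    have h11 : mnorm T * (K₂ + K₃) * mnorm S ≤ (mnorm T * mnorm S + 1) * (K₂ + K₃ + 1) := by
      nlinarith [mul_nonneg hmT0 hmS0]
    calc mnorm (T * Matrix.reindex e e (Matrix.fromBlocks G 0 0 H) * S)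
        ≤ mnorm T * ((K₂ + K₃) * lam ^ ((ν:ℝ) - 1)) * mnorm S := by
          refine hchain.trans ?_
          refine mul_le_mul_of_nonneg_right (mul_le_mul_of_nonneg_left hGH3 hmT0) hmS0
      _ = (mnorm T * (K₂ + K₃) * mnorm S) * lam ^ ((ν:ℝ) - 1) := by ring
      _ ≤ (mnorm T * mnorm S + 1) * (K₂ + K₃ + 1) * lam ^ ((ν:ℝ) - 1) :=
          mul_le_mul_of_nonneg_right h11 hX0
  · -- lower bound
    rintro k ⟨M, hM, ω, hbound⟩
    by_contra hcon
    push_neg at hcon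
    obtain ⟨ν', rfl⟩ : ∃ ν', ν = ν' + 1 := ⟨ν - 1, by omega⟩
    have hNpow : N ^ ν' ≠ 0 := by
      intro h
      have := hν.2 h
      omega
    have hex : ∃ a b, (N ^ ν') a b ≠ 0 := by
      by_contra hall
      push_neg at hall
      exact hNpow (by ext a b; exact hall a b)
    obtain ⟨a, b, hz⟩ := hex
    have hzpos : 0 < ‖(N ^ ν') a b‖ := norm_pos_iff.mpr hz
    set Z : ℝ := ‖(N ^ ν') a b‖ with hZ
    set K₃ : ℝ := ∑ i ∈ Finset.range (ν' + 1), mnorm (N ^ i) with hK₃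
    have hK₃0 : 0 ≤ K₃ := Finset.sum_nonneg fun i _ => mnorm_nonneg _
    set C₅ : ℝ := mnorm T⁻¹ * M * mnorm S⁻¹ with hC₅
    have hC₅0 : 0 ≤ C₅ := by
      rw [hC₅]
      exact mul_nonneg (mul_nonneg (mnorm_nonneg T⁻¹) hM.le) (mnorm_nonneg S⁻¹)
    set lam : ℝ := max (max ω c₀) (max 1 ((K₃ + C₅) / Z)) + 1 with hlamdef
    have hmax1 : (1:ℝ) ≤ max (max ω c₀) (max 1 ((K₃ + C₅) / Z)) :=
      le_trans (le_max_left 1 _) (le_max_right _ _)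
    have h1 : 1 < lam := by rw [hlamdef]; linarith
    have hxpos : (0:ℝ) < lam := by linarith
    have h2 : c₀ < lam := by
      have := le_trans (le_max_right ω c₀) (le_max_left _ (max 1 ((K₃ + C₅) / Z)))
      rw [hlamdef]; linarith
    have hω : ω < lam := by
      have := le_trans (le_max_left ω c₀) (le_max_left _ (max 1 ((K₃ + C₅) / Z)))
      rw [hlamdef]; linarith
    have hquot : (K₃ + C₅) / Z < lam := by
      have h12 : (K₃ + C₅) / Z ≤ max 1 ((K₃ + C₅) / Z) := le_max_right 1 ((K₃ + C₅) / Z)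
      have h13 : max 1 ((K₃ + C₅) / Z) ≤ max (max ω c₀) (max 1 ((K₃ + C₅) / Z)) :=
        le_max_right (max ω c₀) (max 1 ((K₃ + C₅) / Z))
      rw [hlamdef]; linarith
    have hresl := hres lam h1 h2
    have hbnd := hbound lam hω
    rw [abs_of_pos hxpos] at hbnd
    set G : Matrix (Fin p) (Fin p) ℂ :=
      ((lam : ℂ) • (1 : Matrix (Fin p) (Fin p) ℂ) - J)⁻¹ with hGd
    set H : Matrix (Fin q) (Fin q) ℂ :=
      -(∑ i ∈ Finset.range (ν' + 1), (lam : ℂ) ^ i • N ^ i) with hHd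
    set R : Matrix (Fin n) (Fin n) ℂ :=
      Matrix.reindex e e (Matrix.fromBlocks G 0 0 H) with hRd
    have hR : R = T⁻¹ * ((((lam : ℂ) • E - A))⁻¹ * S⁻¹) := by
      rw [hresl, Matrix.mul_assoc (T * R) S S⁻¹, Matrix.mul_nonsing_inv S hS,
        Matrix.mul_one, ← Matrix.mul_assoc, Matrix.nonsing_inv_mul T hT, Matrix.one_mul]
    have hRnorm : mnorm R ≤ C₅ * lam ^ ((ν':ℝ) - 1) := by
      have hstep : mnorm R ≤ mnorm T⁻¹ * (mnorm ((((lam : ℂ) • E - A))⁻¹) * mnorm S⁻¹) := by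
        rw [hR]
        refine (mnorm_mul_le _ _).trans ?_
        refine mul_le_mul_of_nonneg_left ?_ (mnorm_nonneg T⁻¹)
        exact mnorm_mul_le _ _
      have hk2 : lam ^ ((k:ℝ) - 1) ≤ lam ^ ((ν':ℝ) - 1) := by
        refine Real.rpow_le_rpow_of_exponent_le h1.le ?_
        have : (k:ℝ) ≤ (ν':ℝ) := by exact_mod_cast Nat.lt_succ_iff.mp hcon
        linarith
      calc mnorm R ≤ mnorm T⁻¹ * (mnorm ((((lam : ℂ) • E - A))⁻¹) * mnorm S⁻¹) := hstep
        _ ≤ mnorm T⁻¹ * ((M * lam ^ ((k:ℝ) - 1)) * mnorm S⁻¹) := by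
            refine mul_le_mul_of_nonneg_left ?_ (mnorm_nonneg T⁻¹)
            exact mul_le_mul_of_nonneg_right hbnd (mnorm_nonneg S⁻¹)
        _ = C₅ * lam ^ ((k:ℝ) - 1) := by rw [hC₅]; ring
        _ ≤ C₅ * lam ^ ((ν':ℝ) - 1) := mul_le_mul_of_nonneg_left hk2 hC₅0
    have hRval : R (e (Sum.inr a)) (e (Sum.inr b)) = H a b := by
      rw [hRd]
      simp [Matrix.reindex_apply, Matrix.submatrix_apply, Equiv.symm_apply_apply,
        Matrix.fromBlocks_apply₂₂]
    have hupper : ‖H a b‖ ≤ C₅ * lam ^ ((ν':ℝ) - 1) := by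
      rw [← hRval]
      exact (abs_entry_le_mnorm R _ _).trans hRnorm
    -- lower bound on |H a b|
    have hHab : H a b = -((∑ i ∈ Finset.range ν', (lam : ℂ) ^ i * ((N ^ i) a b)) +
        (lam : ℂ) ^ ν' * ((N ^ ν') a b)) := by
      rw [hHd]
      simp only [Matrix.neg_apply, Matrix.sum_apply, Matrix.smul_apply, smul_eq_mul]
      rw [Finset.sum_range_succ]
    set s : ℂ := ∑ i ∈ Finset.range ν', (lam : ℂ) ^ i * ((N ^ i) a b) with hsd
    set t : ℂ := (lam : ℂ) ^ ν' * ((N ^ ν') a b) with htd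
    have habs0 : ‖H a b‖ = ‖s + t‖ := by
      rw [hHab, norm_neg]
    have htri : ‖t‖ - ‖s‖ ≤ ‖s + t‖ := by
      have := norm_add_le (s + t) (-s)
      simp only [norm_neg] at this
      have h9 : s + t + -s = t := by ring
      rw [h9] at this
      linarith
    have habst : ‖t‖ = lam ^ ((ν':ℝ)) * Z := by
      rw [htd, norm_mul, norm_pow, Complex.norm_real, Real.norm_eq_abs, abs_of_pos hxpos, hZ,
        Real.rpow_natCast]
    have habss : ‖s‖ ≤ K₃ * lam ^ ((ν':ℝ) - 1) := by
      calc ‖s‖ ≤ ∑ i ∈ Finset.range ν', ‖(lam : ℂ) ^ i * ((N ^ i) a b)‖ := by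
            rw [hsd]
            exact
              norm_sum_le (Finset.range ν') (fun i => (lam : ℂ) ^ i * ((N ^ i) a b))
        _ ≤ ∑ i ∈ Finset.range ν', mnorm (N ^ i) * lam ^ ((ν':ℝ) - 1) := by
            refine Finset.sum_le_sum fun i hi => ?_
            rw [norm_mul, norm_pow, Complex.norm_real, Real.norm_eq_abs, abs_of_pos hxpos]
            have hb1 : ‖(N ^ i) a b‖ ≤ mnorm (N ^ i) := abs_entry_le_mnorm _ _ _
            have hb2 : lam ^ i ≤ lam ^ ((ν':ℝ) - 1) := by
              rw [← Real.rpow_natCast lam i]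
              refine Real.rpow_le_rpow_of_exponent_le h1.le ?_
              have : (i:ℝ) + 1 ≤ (ν':ℝ) := by
                exact_mod_cast Nat.succ_le_of_lt (Finset.mem_range.mp hi)
              linarith
            calc lam ^ i * ‖(N ^ i) a b‖
                ≤ lam ^ ((ν':ℝ) - 1) * mnorm (N ^ i) :=
                  mul_le_mul hb2 hb1 (norm_nonneg _) (Real.rpow_nonneg hxpos.le _)
              _ = mnorm (N ^ i) * lam ^ ((ν':ℝ) - 1) := mul_comm _ _
        _ ≤ K₃ * lam ^ ((ν':ℝ) - 1) := by
            rw [← Finset.sum_mul]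
            refine mul_le_mul_of_nonneg_right ?_ (Real.rpow_nonneg hxpos.le _)
            rw [hK₃]
            refine Finset.sum_le_sum_of_subset_of_nonneg ?_ (fun i _ _ => mnorm_nonneg _)
            exact Finset.range_subset_range.mpr (Nat.le_succ ν')
    have hpowsplit : lam ^ ((ν':ℝ)) = lam ^ ((ν':ℝ) - 1) * lam := by
      rw [← Real.rpow_add_one hxpos.ne' ((ν':ℝ) - 1)]
      norm_num
    have hfinal : Z * lam ≤ K₃ + C₅ := by
      have hc1 : lam ^ ((ν':ℝ)) * Z - K₃ * lam ^ ((ν':ℝ) - 1) ≤ C₅ * lam ^ ((ν':ℝ) - 1) := by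
        rw [habs0] at hupper
        linarith [htri, habss, habst]
      have hppos : (0:ℝ) < lam ^ ((ν':ℝ) - 1) := Real.rpow_pos_of_pos hxpos _
      rw [hpowsplit] at hc1
      have hc2 : (Z * lam) * lam ^ ((ν':ℝ) - 1) ≤ (K₃ + C₅) * lam ^ ((ν':ℝ) - 1) := by
        nlinarith
      exact le_of_mul_le_mul_right hc2 hppos
    have hlast : K₃ + C₅ < Z * lam := by
      rw [div_lt_iff₀ hzpos] at hquot
      linarith [mul_comm lam Z, hquot]
    linarith
end
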